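/- arXiv:1904.08583 — 12 statements merged into one kernel-verified Lean document; each statement's English description precedes it below -/
import Mathlib

section
/- For the cycle C_n on n ≥ 3 vertices, md(C_n) = ⌊n/2⌋. -/
/-- An MD-coloring: an edge-coloring such that every pair of distinct vertices is
separated by a monochromatic edge-cut (equivalently, by some color class). -/
def isMDColoring {V : Type*} (G : SimpleGraph V) (c : Sym2 V → ℕ) : Prop :=
  ∀ u v : V, u ≠ v → ∃ i : ℕ, ¬ (G.deleteEdges {e | c e = i}).Reachable u v

/-- The monochromatic disconnection number: the maximum number of colors used on
edges over all MD-colorings. -/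
noncomputable def mdNum {V : Type*} (G : SimpleGraph V) : ℕ :=
  sSup {n | ∃ c : Sym2 V → ℕ, isMDColoring G c ∧ (c '' G.edgeSet).ncard = n}

namespace CycleMD

open SimpleGraph
open Fin.NatCast Fin.CommRing

variable {n : ℕ}

/-- Edge `i` of the cycle: between vertex `i` and `i+1`. -/
def E (n : ℕ) [NeZero n] (i : Fin n) : Sym2 (Fin n) := s(i, i + 1)

lemma adj_iff [NeZero n] (hn : 3 ≤ n) {x y : Fin n} :
    (cycleGraph n).Adj x y ↔ y = x + 1 ∨ x = y + 1 := by
  obtain ⟨N, rfl⟩ : ∃ N, n = N + 2 := ⟨n - 2, by omega⟩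
  rw [SimpleGraph.cycleGraph_adj, sub_eq_iff_eq_add, sub_eq_iff_eq_add,
    add_comm (1 : Fin (N+2)) y, add_comm (1 : Fin (N+2)) x, or_comm]

lemma one_ne_zero' [NeZero n] (hn : 3 ≤ n) : (1 : Fin n) ≠ 0 := by
  intro h
  have h2 : ((1 : ℕ) : Fin n) = 0 := by push_cast; exact h
  rw [Fin.natCast_eq_zero] at h2
  exact absurd (Nat.le_of_dvd one_pos h2) (by omega)

lemma two_ne_zero' [NeZero n] (hn : 3 ≤ n) : (2 : Fin n) ≠ 0 := by
  intro h
  have h2 : ((2 : ℕ) : Fin n) = 0 := by push_cast; exact h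
  rw [Fin.natCast_eq_zero] at h2
  exact absurd (Nat.le_of_dvd two_pos h2) (by omega)

lemma adj_succ (hn : 3 ≤ n) [NeZero n] (i : Fin n) : (cycleGraph n).Adj i (i + 1) := by
  rw [adj_iff hn]; left; rfl

lemma E_mem_edgeSet (hn : 3 ≤ n) [NeZero n] (i : Fin n) : E n i ∈ (cycleGraph n).edgeSet :=
  (SimpleGraph.mem_edgeSet _).mpr (adj_succ hn i)

lemma E_inj (hn : 3 ≤ n) [NeZero n] : Function.Injective (E n) := by
  intro i j h
  rw [E, E, Sym2.eq_iff] at h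
  rcases h with ⟨h1, _⟩ | ⟨h1, h2⟩
  · exact h1
  · exfalso
    have key : i + 0 = i + 2 := by
      rw [add_zero]
      calc i = j + 1 := h1
      _ = (i + 1) + 1 := by rw [h2]
      _ = i + 2 := by ring
    have h2' : (0 : Fin n) = 2 := add_left_cancel key
    exact two_ne_zero' hn h2'.symm

lemma edge_repr (hn : 3 ≤ n) [NeZero n] {x y : Fin n} (h : (cycleGraph n).Adj x y) :
    ∃ i : Fin n, s(x, y) = E n i := by
  rw [adj_iff hn] at h
  rcases h with h | h
  · exact ⟨x, by rw [E, h]⟩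
  · exact ⟨y, by rw [E, h, Sym2.eq_swap]⟩

lemma edgeSet_eq (hn : 3 ≤ n) [NeZero n] :
    (cycleGraph n).edgeSet = Set.range (E n) := by
  ext e
  constructor
  · intro he
    induction e with
    | h x y =>
      obtain ⟨i, hi⟩ := edge_repr hn ((SimpleGraph.mem_edgeSet _).mp he)
      exact ⟨i, hi.symm⟩
  · rintro ⟨i, rfl⟩
    exact E_mem_edgeSet hn i

lemma reachable_iff_of_invariant {V : Type*} {G : SimpleGraph V} {P : V → Prop}
    (h : ∀ x y, G.Adj x y → (P x ↔ P y)) {u v : V} (hr : G.Reachable u v) : P u ↔ P v := by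
  obtain ⟨w⟩ := hr
  induction w with
  | nil => exact Iff.rfl
  | cons ha _ ih => exact (h _ _ ha).trans ih

lemma disconnected_of_cut (hn : 3 ≤ n) [NeZero n] {S : Set (Sym2 (Fin n))} {a b : Fin n}
    (hab : a.val < b.val) (ha : E n a ∈ S) (hb : E n b ∈ S) {u v : Fin n}
    (hsep : ¬ ((a.val < u.val ∧ u.val ≤ b.val) ↔ (a.val < v.val ∧ v.val ≤ b.val))) :
    ¬ ((cycleGraph n).deleteEdges S).Reachable u v := by
  intro hr
  apply hsep
  have key : ∀ x : Fin n, x ≠ a → x ≠ b →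
      ((a.val < x.val ∧ x.val ≤ b.val) ↔ (a.val < (x+1).val ∧ (x+1).val ≤ b.val)) := by
    intro x hxa hxb
    have hxa' : x.val ≠ a.val := fun h => hxa (Fin.ext h)
    have hxb' : x.val ≠ b.val := fun h => hxb (Fin.ext h)
    have hbn : b.val < n := b.isLt
    have hxn : x.val < n := x.isLt
    have h1 : (1 : Fin n).val = 1 := by
      rw [Fin.val_one']; exact Nat.mod_eq_of_lt (by omega)
    have hval : (x+1).val = (x.val + 1) % n := by rw [Fin.val_add, h1]
    by_cases hlast : x.val + 1 = n
    · rw [hval, hlast, Nat.mod_self]; omega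
    · rw [hval, Nat.mod_eq_of_lt (by omega)]; omega
  refine reachable_iff_of_invariant (P := fun x => a.val < x.val ∧ x.val ≤ b.val)
    (fun x y hxy => ?_) hr
  rw [SimpleGraph.deleteEdges_adj] at hxy
  obtain ⟨hadj, hS⟩ := hxy
  rw [adj_iff hn] at hadj
  rcases hadj with h | h
  · subst h
    have hxa : x ≠ a := fun h => hS (h ▸ ha)
    have hxb : x ≠ b := fun h => hS (h ▸ hb)
    exact key x hxa hxb
  · subst h
    rw [Sym2.eq_swap] at hS
    have hya : y ≠ a := fun h => hS (h ▸ ha)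
    have hyb : y ≠ b := fun h => hS (h ▸ hb)
    exact (key y hya hyb).symm

lemma reachable_del (hn : 3 ≤ n) [NeZero n] {S : Set (Sym2 (Fin n))} {k : Fin n}
    (hS : ∀ i : Fin n, E n i ∈ S → i = k) :
    ((cycleGraph n).deleteEdges S).Reachable (k + 1) k := by
  have key : ∀ j : ℕ, j ≤ n - 1 →
      ((cycleGraph n).deleteEdges S).Reachable (k+1) (k + 1 + (j : Fin n)) := by
    intro j
    induction j with
    | zero => intro _; simpa using Reachable.refl (k+1)
    | succ j ih =>
      intro hj
      refine (ih (by omega)).trans ?_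
      have hstep : ((cycleGraph n).deleteEdges S).Adj (k + 1 + (j:Fin n)) (k + 1 + (j:Fin n) + 1) := by
        rw [SimpleGraph.deleteEdges_adj]
        refine ⟨adj_succ hn _, fun hmem => ?_⟩
        have heq := hS _ hmem
        have h' : k + ((j:Fin n) + 1) = k + 0 := by
          rw [add_zero, add_comm (j:Fin n) 1, ← add_assoc]; exact heq
        have h0 : ((j + 1 : ℕ) : Fin n) = 0 := by push_cast; exact add_left_cancel h'
        rw [Fin.natCast_eq_zero] at h0
        have := Nat.le_of_dvd (by omega) h0
        omega
      have hcast : ((j+1 : ℕ) : Fin n) = (j : Fin n) + 1 := by push_cast; rfl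
      rw [hcast, ← add_assoc]
      exact hstep.reachable
  have h0 : ((n - 1 : ℕ) : Fin n) + 1 = 0 := by
    have h1 : (((n-1)+1 : ℕ) : Fin n) = 0 := by
      rw [show (n-1)+1 = n from by omega]; exact Fin.natCast_self n
    push_cast at h1; exact h1
  have hkey := key (n-1) le_rfl
  have h2 : k + 1 + ((n-1 : ℕ) : Fin n) = k := by
    rw [add_assoc, add_comm 1 ((n-1:ℕ) : Fin n), h0, add_zero]
  rwa [h2] at hkey

lemma fiber_two (hn : 3 ≤ n) [NeZero n] {c : Sym2 (Fin n) → ℕ}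
    (hc : isMDColoring (cycleGraph n) c) (k : Fin n) :
    ∃ j : Fin n, j ≠ k ∧ c (E n j) = c (E n k) := by
  have hne : (k : Fin n) ≠ k + 1 := by
    intro h
    have h' : k + 0 = k + 1 := by rw [add_zero]; exact h
    exact one_ne_zero' hn (add_left_cancel h').symm
  obtain ⟨i, hi⟩ := hc k (k+1) hne
  have hEk : c (E n k) = i := by
    by_contra hck
    exact hi (SimpleGraph.Adj.reachable
      (SimpleGraph.deleteEdges_adj.mpr ⟨adj_succ hn k, hck⟩))
  by_contra hcon
  push_neg at hcon
  have hS : ∀ j : Fin n, E n j ∈ {e | c e = i} → j = k := by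
    intro j hj
    by_contra hjk
    exact hcon j hjk (by rw [hEk]; exact hj)
  exact hi ((reachable_del hn hS).symm)

lemma upper (hn : 3 ≤ n) [NeZero n] {c : Sym2 (Fin n) → ℕ}
    (hc : isMDColoring (cycleGraph n) c) :
    (c '' (cycleGraph n).edgeSet).ncard ≤ n / 2 := by
  classical
  set s : Finset (Sym2 (Fin n)) := Finset.univ.image (E n) with hsdef
  have hs : ((s : Finset (Sym2 (Fin n))) : Set (Sym2 (Fin n))) = (cycleGraph n).edgeSet := by
    rw [edgeSet_eq hn, hsdef]
    simp
  have himg : c '' (cycleGraph n).edgeSet = ((s.image c : Finset ℕ) : Set ℕ) := by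
    rw [← hs, Finset.coe_image]
    simp [hsdef]
  rw [himg, Set.ncard_coe_finset]
  have hcard : s.card = n := by
    rw [hsdef, Finset.card_image_of_injective _ (E_inj hn), Finset.card_univ, Fintype.card_fin]
  have h2 : 2 * (s.image c).card ≤ s.card := by
    apply Finset.mul_card_image_le_card
    intro b hb
    obtain ⟨e, he, rfl⟩ := Finset.mem_image.mp hb
    obtain ⟨k, _, rfl⟩ := Finset.mem_image.mp (hsdef ▸ he)
    obtain ⟨j, hjk, hcj⟩ := fiber_two hn hc k
    have hsub : ({E n j, E n k} : Finset (Sym2 (Fin n))) ⊆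
        s.filter (fun e => c e = c (E n k)) := by
      intro x hx
      rcases Finset.mem_insert.mp hx with rfl | hx
      · exact Finset.mem_filter.mpr
          ⟨hsdef ▸ Finset.mem_image_of_mem _ (Finset.mem_univ j), hcj⟩
      · rw [Finset.mem_singleton.mp hx]
        exact Finset.mem_filter.mpr
          ⟨hsdef ▸ Finset.mem_image_of_mem _ (Finset.mem_univ k), rfl⟩
    calc 2 = ({E n j, E n k} : Finset (Sym2 (Fin n))).card :=
          (Finset.card_pair (fun h => hjk (E_inj hn h))).symm
    _ ≤ _ := Finset.card_le_card hsub
  rw [hcard] at h2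
  omega

/-- The optimal coloring: edge `i` gets color `i % (n/2)`. -/
noncomputable def col (n : ℕ) [NeZero n] : Sym2 (Fin n) → ℕ := fun e =>
  if h : ∃ i : Fin n, E n i = e then (Classical.choose h).val % (n / 2) else 0

lemma col_E (hn : 3 ≤ n) [NeZero n] (i : Fin n) : col n (E n i) = i.val % (n / 2) := by
  have h : ∃ j : Fin n, E n j = E n i := ⟨i, rfl⟩
  rw [col, dif_pos h, E_inj hn (Classical.choose_spec h)]

lemma mod_sub {m a : ℕ} (h : m ≤ a) : (a - m) % m = a % m := by
  conv_rhs => rw [← Nat.sub_add_cancel h]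
  rw [Nat.add_mod_right]

lemma col_isMD (hn : 3 ≤ n) [NeZero n] : isMDColoring (cycleGraph n) (col n) := by
  have hm : 1 ≤ n / 2 := by omega
  have main : ∀ u v : Fin n, u.val < v.val →
      ∃ i : ℕ, ¬ ((cycleGraph n).deleteEdges {e | col n e = i}).Reachable u v := by
    intro u v huv
    have hvn : v.val < n := v.isLt
    by_cases hd : v.val - u.val ≤ n / 2
    · by_cases h1 : u.val + n / 2 < n
      · refine ⟨u.val % (n / 2),
          disconnected_of_cut hn (a := u) (b := ⟨u.val + n / 2, h1⟩) ?_ ?_ ?_ ?_⟩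
        · show u.val < u.val + n / 2; omega
        · show col n (E n u) = u.val % (n / 2)
          rw [col_E hn]
        · show col n (E n ⟨u.val + n / 2, h1⟩) = u.val % (n / 2)
          rw [col_E hn]
          exact Nat.add_mod_right u.val (n / 2)
        · show ¬ ((u.val < u.val ∧ u.val ≤ u.val + n / 2) ↔
            (u.val < v.val ∧ v.val ≤ u.val + n / 2))
          intro h; omega
      · have hum : n / 2 ≤ u.val := by omega
        refine ⟨u.val % (n / 2),
          disconnected_of_cut hn (a := ⟨u.val - n / 2, by omega⟩) (b := u) ?_ ?_ ?_ ?_⟩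
        · show u.val - n / 2 < u.val; omega
        · show col n (E n ⟨u.val - n / 2, by omega⟩) = u.val % (n / 2)
          rw [col_E hn]
          exact mod_sub hum
        · show col n (E n u) = u.val % (n / 2)
          rw [col_E hn]
        · show ¬ ((u.val - n / 2 < u.val ∧ u.val ≤ u.val) ↔
            (u.val - n / 2 < v.val ∧ v.val ≤ u.val))
          intro h; omega
    · have hvm : n / 2 ≤ v.val := by omega
      refine ⟨v.val % (n / 2),
        disconnected_of_cut hn (a := ⟨v.val - n / 2, by omega⟩) (b := v) ?_ ?_ ?_ ?_⟩
      · show v.val - n / 2 < v.val; omega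
      · show col n (E n ⟨v.val - n / 2, by omega⟩) = v.val % (n / 2)
        rw [col_E hn]
        exact mod_sub hvm
      · show col n (E n v) = v.val % (n / 2)
        rw [col_E hn]
      · show ¬ ((v.val - n / 2 < u.val ∧ u.val ≤ v.val) ↔
          (v.val - n / 2 < v.val ∧ v.val ≤ v.val))
        intro h; omega
  intro u v huv
  rcases Nat.lt_or_ge u.val v.val with h | h
  · exact main u v h
  · have h' : v.val < u.val := by
      rcases Nat.lt_or_ge v.val u.val with h2 | h2
      · exact h2
      · exact absurd (Fin.ext (le_antisymm h h2)).symm huv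
    obtain ⟨i, hi⟩ := main v u h'
    exact ⟨i, fun hr => hi hr.symm⟩

lemma col_image (hn : 3 ≤ n) [NeZero n] :
    col n '' (cycleGraph n).edgeSet = ↑(Finset.range (n / 2)) := by
  ext j
  simp only [Finset.coe_range, Set.mem_Iio, Set.mem_image]
  constructor
  · rintro ⟨e, he, rfl⟩
    rw [edgeSet_eq hn] at he
    obtain ⟨i, rfl⟩ := he
    rw [col_E hn]
    exact Nat.mod_lt _ (by omega)
  · intro hj
    refine ⟨E n ⟨j, by omega⟩, E_mem_edgeSet hn _, ?_⟩
    rw [col_E hn]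
    exact Nat.mod_eq_of_lt hj

end CycleMD

theorem cycle_md (n : ℕ) (hn : 3 ≤ n) :
    mdNum (SimpleGraph.cycleGraph n) = n / 2 := by
  haveI : NeZero n := ⟨by omega⟩
  rw [mdNum]
  apply IsGreatest.csSup_eq
  constructor
  · exact ⟨CycleMD.col n, CycleMD.col_isMD hn,
      by rw [CycleMD.col_image hn, Set.ncard_coe_finset, Finset.card_range]⟩
  · rintro k ⟨c, hc, rfl⟩
    exact CycleMD.upper hn hc
end

section
/- For n ≥ 2 and t ≥ 3, the complete bipartite graph K_{n,t} satisfies md(K_{n,t}) = 1. -/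
open Sum

/-- Extract a "monochromatic cut" from non-reachability after deleting a color class. -/
lemma cut_of_not_reachable {V : Type*} (G : SimpleGraph V) (c : Sym2 V → ℕ) (i : ℕ)
    (u v : V) (h : ¬ (G.deleteEdges {e | c e = i}).Reachable u v) :
    ∃ B : Set V, u ∈ B ∧ v ∉ B ∧ ∀ p q, G.Adj p q → p ∈ B → q ∉ B → c s(p, q) = i := by
  refine ⟨{w | (G.deleteEdges {e | c e = i}).Reachable u w}, SimpleGraph.Reachable.refl u, h,
    fun p q hadj hp hq => ?_⟩
  by_contra hne
  exact hq (hp.trans (SimpleGraph.Adj.reachable (by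
    rw [SimpleGraph.deleteEdges_adj]; exact ⟨hadj, hne⟩)))

section Key

variable {n t : ℕ} (M : Fin n → Fin t → ℕ)

/-- Crossing condition for a set `B` in the complete bipartite vertex set. -/
def Cross (B : Set (Fin n ⊕ Fin t)) (i : ℕ) : Prop :=
  ∀ x y, (inl x ∈ B ↔ inr y ∉ B) → M x y = i

lemma key (hn : 2 ≤ n) (ht : 3 ≤ t)
    (H : ∀ u v : Fin n ⊕ Fin t, u ≠ v → ∃ i B, u ∈ B ∧ v ∉ B ∧ Cross M B i) :
    ∃ κ, ∀ x y, M x y = κ := by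
  -- two distinct rows
  set a1 : Fin n := ⟨0, by omega⟩ with ha1
  set a2 : Fin n := ⟨1, by omega⟩ with ha2
  have ha12 : a1 ≠ a2 := by simp [ha1, ha2, Fin.ext_iff]
  obtain ⟨κ, A, hA1, hA2, hA⟩ := H (inl a1) (inl a2) (by simpa using ha12)
  refine ⟨κ, ?_⟩
  have star : ∀ b, M a1 b = κ ∨ M a2 b = κ := by
    intro b
    by_cases hb : inr b ∈ A
    · exact Or.inr (hA a2 b ⟨fun h => absurd h hA2, fun h => absurd hb h⟩)
    · exact Or.inl (hA a1 b ⟨fun _ => hb, fun _ => hA1⟩)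
  -- three distinct columns
  have b0 : Fin t := ⟨0, by omega⟩
  -- pattern lemma: a non-κ cut splitting rows r1 r2 (satisfying star) is impossible
  have patternCase : ∀ r1 r2 : Fin n, (∀ b, M r1 b = κ ∨ M r2 b = κ) →
      ∀ j, j ≠ κ → ∀ B : Set (Fin n ⊕ Fin t), inl r1 ∈ B → inl r2 ∉ B →
      Cross M B j → False := by
    intro r1 r2 hstar j hj B h1 h2 hB
    have pat : ∀ z, (M r1 z = κ ∧ M r2 z = j) ∨ (M r1 z = j ∧ M r2 z = κ) := by
      intro z
      by_cases hz : inr z ∈ B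
      · have h2z : M r2 z = j := hB r2 z ⟨fun h => absurd h h2, fun h => absurd hz h⟩
        rcases hstar z with h | h
        · exact Or.inl ⟨h, h2z⟩
        · exact absurd (h2z ▸ h) hj
      · have h1z : M r1 z = j := hB r1 z ⟨fun _ => hz, fun _ => h1⟩
        rcases hstar z with h | h
        · exact absurd (h1z ▸ h) hj
        · exact Or.inr ⟨h1z, h⟩
    -- pigeonhole among three columns: two columns with the same pattern
    set z0 : Fin t := ⟨0, by omega⟩ with hz0
    set z1 : Fin t := ⟨1, by omega⟩ with hz1
    set z2 : Fin t := ⟨2, by omega⟩ with hz2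
    have key2 : ∀ y y' : Fin t, y ≠ y' → M r1 y = M r1 y' → M r2 y = M r2 y' →
        M r1 y ≠ M r2 y → False := by
      intro y y' hyy e1 e2 hne
      obtain ⟨l, C, hC1, hC2, hC⟩ := H (inr y) (inr y') (by simpa using hyy)
      have l1 : M r1 y = l := by
        by_cases hr : inl r1 ∈ C
        · rw [e1]; exact hC r1 y' ⟨fun _ => hC2, fun _ => hr⟩
        · exact hC r1 y ⟨fun h => absurd h hr, fun h => absurd hC1 h⟩
      have l2 : M r2 y = l := by
        by_cases hr : inl r2 ∈ C
        · rw [e2]; exact hC r2 y' ⟨fun _ => hC2, fun _ => hr⟩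
        · exact hC r2 y ⟨fun h => absurd h hr, fun h => absurd hC1 h⟩
      exact hne (l1.trans l2.symm)
    have hz01 : z0 ≠ z1 := by simp [hz0, hz1, Fin.ext_iff]
    have hz02 : z0 ≠ z2 := by simp [hz0, hz2, Fin.ext_iff]
    have hz12 : z1 ≠ z2 := by simp [hz1, hz2, Fin.ext_iff]
    rcases pat z0 with ⟨p0, q0⟩ | ⟨p0, q0⟩ <;>
      rcases pat z1 with ⟨p1, q1⟩ | ⟨p1, q1⟩ <;>
      rcases pat z2 with ⟨p2, q2⟩ | ⟨p2, q2⟩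
    · exact key2 z0 z1 hz01 (by rw [p0, p1]) (by rw [q0, q1]) (by rw [p0, q0]; exact fun h => hj h.symm)
    · exact key2 z0 z1 hz01 (by rw [p0, p1]) (by rw [q0, q1]) (by rw [p0, q0]; exact fun h => hj h.symm)
    · exact key2 z0 z2 hz02 (by rw [p0, p2]) (by rw [q0, q2]) (by rw [p0, q0]; exact fun h => hj h.symm)
    · exact key2 z1 z2 hz12 (by rw [p1, p2]) (by rw [q1, q2]) (by rw [p1, q1]; exact hj)
    · exact key2 z1 z2 hz12 (by rw [p1, p2]) (by rw [q1, q2]) (by rw [p1, q1]; exact fun h => hj h.symm)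
    · exact key2 z0 z2 hz02 (by rw [p0, p2]) (by rw [q0, q2]) (by rw [p0, q0]; exact hj)
    · exact key2 z0 z1 hz01 (by rw [p0, p1]) (by rw [q0, q1]) (by rw [p0, q0]; exact hj)
    · exact key2 z0 z1 hz01 (by rw [p0, p1]) (by rw [q0, q1]) (by rw [p0, q0]; exact hj)
  -- lemma P : any non-κ cut splitting a1, a2 is impossible
  have lemP : ∀ j, j ≠ κ → ∀ B : Set (Fin n ⊕ Fin t),
      ((inl a1 ∈ B ∧ inl a2 ∉ B) ∨ (inl a1 ∉ B ∧ inl a2 ∈ B)) → Cross M B j → False := by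
    rintro j hj B (⟨h1, h2⟩ | ⟨h1, h2⟩) hB
    · exact patternCase a1 a2 star j hj B h1 h2 hB
    · exact patternCase a2 a1 (fun b => (star b).symm) j hj B h2 h1 hB
  -- lemma Q : any cut separating two right vertices has color κ
  have lemQ : ∀ (y y' : Fin t), ∀ j, ∀ B : Set (Fin n ⊕ Fin t),
      inr y ∈ B → inr y' ∉ B → Cross M B j → j = κ := by
    intro y y' j B hy hy' hB
    by_contra hj
    by_cases h1 : inl a1 ∈ B <;> by_cases h2 : inl a2 ∈ B
    · have e1 : M a1 y' = j := hB a1 y' ⟨fun _ => hy', fun _ => h1⟩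
      have e2 : M a2 y' = j := hB a2 y' ⟨fun _ => hy', fun _ => h2⟩
      rcases star y' with h | h
      · exact hj (e1 ▸ h)
      · exact hj (e2 ▸ h)
    · exact lemP j hj B (Or.inl ⟨h1, h2⟩) hB
    · exact lemP j hj B (Or.inr ⟨h1, h2⟩) hB
    · have e1 : M a1 y = j := hB a1 y ⟨fun h => absurd h h1, fun h => absurd hy h⟩
      have e2 : M a2 y = j := hB a2 y ⟨fun h => absurd h h2, fun h => absurd hy h⟩
      rcases star y with h | h
      · exact hj (e1 ▸ h)
      · exact hj (e2 ▸ h)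
  -- main step
  intro x y
  obtain ⟨m, B, hB1, hB2, hB⟩ := H (inl x) (inr y) (by simp)
  have hxy : M x y = m := hB x y ⟨fun _ => hB2, fun _ => hB1⟩
  by_cases hm : m = κ
  · rw [hxy, hm]
  exfalso
  by_cases h1 : inl a1 ∈ B <;> by_cases h2 : inl a2 ∈ B
  · have e1 : M a1 y = m := hB a1 y ⟨fun _ => hB2, fun _ => h1⟩
    have e2 : M a2 y = m := hB a2 y ⟨fun _ => hB2, fun _ => h2⟩
    rcases star y with h | h
    · exact hm (e1 ▸ h)
    · exact hm (e2 ▸ h)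
  · exact lemP m hm B (Or.inl ⟨h1, h2⟩) hB
  · exact lemP m hm B (Or.inr ⟨h1, h2⟩) hB
  · -- both a1, a2 outside B: then no right vertex is in B, so row x is constant m
    have hR : ∀ b, inr b ∉ B := by
      intro b hb
      have e1 : M a1 b = m := hB a1 b ⟨fun h => absurd h h1, fun h => absurd hb h⟩
      have e2 : M a2 b = m := hB a2 b ⟨fun h => absurd h h2, fun h => absurd hb h⟩
      rcases star b with h | h
      · exact hm (e1 ▸ h)
      · exact hm (e2 ▸ h)
    have rowx : ∀ b, M x b = m := fun b => hB x b ⟨fun _ => hR b, fun _ => hB1⟩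
    set c0 : Fin t := ⟨0, by omega⟩ with hc0
    set c1 : Fin t := ⟨1, by omega⟩ with hc1
    obtain ⟨l, C, hC1, hC2, hC⟩ := H (inr c0) (inr c1)
      (by simp [hc0, hc1, Fin.ext_iff])
    have hlκ : l = κ := lemQ c0 c1 l C hC1 hC2 hC
    have hlm : l = m := by
      by_cases hx : inl x ∈ C
      · rw [← rowx c1]; exact (hC x c1 ⟨fun _ => hC2, fun _ => hx⟩).symm
      · rw [← rowx c0]; exact (hC x c0 ⟨fun h => absurd h hx, fun h => absurd hC1 h⟩).symm
    exact hm (hlm ▸ hlκ)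

end Key

theorem completeBipartite_md (n t : ℕ) (hn : 2 ≤ n) (ht : 3 ≤ t) :
    mdNum (completeBipartiteGraph (Fin n) (Fin t)) = 1 := by
  set G := completeBipartiteGraph (Fin n) (Fin t) with hG
  have e00 : s(inl (⟨0, by omega⟩ : Fin n), inr (⟨0, by omega⟩ : Fin t)) ∈ G.edgeSet := by
    rw [SimpleGraph.mem_edgeSet]; simp [hG]
  have hset : {m | ∃ c : Sym2 (Fin n ⊕ Fin t) → ℕ,
      isMDColoring G c ∧ (c '' G.edgeSet).ncard = m} = {1} := by
    ext m
    simp only [Set.mem_setOf_eq, Set.mem_singleton_iff]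
    constructor
    · rintro ⟨c, hc, rfl⟩
      obtain ⟨κ, hκ⟩ := key (fun x y => c s(inl x, inr y)) hn ht (by
        intro u v huv
        obtain ⟨i, hi⟩ := hc u v huv
        obtain ⟨B, hB1, hB2, hB⟩ := cut_of_not_reachable G c i u v hi
        refine ⟨i, B, hB1, hB2, fun x y hxy => ?_⟩
        by_cases hx : inl x ∈ B
        · exact hB (inl x) (inr y) (by simp [hG]) hx (hxy.mp hx)
        · have hy : inr y ∈ B := by
            by_contra hy; exact hx (hxy.mpr hy)
          have := hB (inr y) (inl x) (by simp [hG]) hy hx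
          rwa [Sym2.eq_swap] at this)
      have himg : c '' G.edgeSet = {κ} := by
        apply Set.Subset.antisymm
        · rintro _ ⟨e, he, rfl⟩
          induction e with
          | _ p q =>
            rw [SimpleGraph.mem_edgeSet] at he
            rcases p with x | y <;> rcases q with x' | y'
            · simp [hG] at he
            · exact hκ x y'
            · rw [Sym2.eq_swap]; exact hκ x' y
            · simp [hG] at he
        · rintro _ rfl
          exact ⟨_, e00, hκ _ _⟩
      rw [himg, Set.ncard_singleton]
    · rintro rfl
      refine ⟨fun _ => 0, fun u v huv => ⟨0, fun hr => huv ?_⟩, ?_⟩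
      · have hbot : G.deleteEdges {e | (fun _ => (0 : ℕ)) e = 0} = ⊥ := by
          ext a b
          simp [SimpleGraph.deleteEdges_adj]
        rw [hbot] at hr
        exact SimpleGraph.reachable_bot.mp hr
      · have : (fun _ => (0 : ℕ)) '' G.edgeSet = {0} := by
          apply Set.Subset.antisymm
          · rintro _ ⟨e, _, rfl⟩; rfl
          · rintro _ rfl; exact ⟨_, e00, rfl⟩
        rw [this, Set.ncard_singleton]
  rw [mdNum, hset, csSup_singleton]
end

section
/- If a connected graph G has a closure structure, i.e., for any two edges e, e' of G there is a sequence of subgraphs G_1, ..., G_k, each isomorphic to K_3 or K_{2,3}, with e ∈ E(G_1), e' ∈ E(G_k), and E(G_i) ∩ E(G_{i+1}) ≠ ∅ for all i, then md(G) = 1. -/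
set_option maxHeartbeats 3000000 in
/-- Core arithmetic lemma for K_{2,3}. -/
private theorem md_core2 (ap aq ar bp bq br j1 j2 j3 : ℕ)
    (hq : aq = ap ∨ bq = ap) (hr : ar = ap ∨ br = ap)
    (yzpq : bq = bp ∨ aq = bp ∨ ap = bp)
    (yzpr : br = bp ∨ ar = bp ∨ ap = bp)
    (xzrq : aq = ar ∨ bq = ar ∨ br = ar)
    (xzqr : ar = aq ∨ br = aq ∨ bq = aq)
    (zwpq1 : ap = j1 ∨ aq = j1) (zwpq2 : bp = j1 ∨ bq = j1)
    (zwpr1 : ap = j2 ∨ ar = j2) (zwpr2 : bp = j2 ∨ br = j2)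
    (zwqr1 : aq = j3 ∨ ar = j3) (zwqr2 : bq = j3 ∨ br = j3) :
    ap = bp := by omega

private theorem md_fin (ap aq ar bp bq br i0 : ℕ)
    (h1 : ap = i0 ∨ bp = i0) (h2 : aq = i0 ∨ bq = i0) (h3 : ar = i0 ∨ br = i0)
    (e1 : ap = bp) (e2 : aq = bq) (e3 : ar = br) :
    ap = aq ∧ ap = ar ∧ ap = bp ∧ ap = bq ∧ ap = br := by omega

section Lemmas

variable {V : Type*} {G : SimpleGraph V} {c : Sym2 V → ℕ} {i : ℕ}

private lemma md_walk_hit {S : Set (Sym2 V)} {u v : V}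
    (h : ¬ (G.deleteEdges S).Reachable u v) (W : G.Walk u v) :
    ∃ e ∈ W.edges, e ∈ S := by
  by_contra h'
  push_neg at h'
  exact h ⟨W.toDeleteEdges S h'⟩

private lemma md_hit1 {u v : V}
    (h : ¬ (G.deleteEdges {e | c e = i}).Reachable u v) (huv : G.Adj u v) :
    c s(u, v) = i := by
  obtain ⟨e, he, heS⟩ := md_walk_hit h huv.toWalk
  simp only [SimpleGraph.Walk.edges_cons, SimpleGraph.Walk.edges_nil,
    List.mem_cons, List.not_mem_nil, or_false] at he
  subst he; exact heS

private lemma md_hit2 {u v w : V}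
    (h : ¬ (G.deleteEdges {e | c e = i}).Reachable u v)
    (h1 : G.Adj u w) (h2 : G.Adj w v) :
    c s(u, w) = i ∨ c s(w, v) = i := by
  obtain ⟨e, he, heS⟩ := md_walk_hit h (SimpleGraph.Walk.cons h1 h2.toWalk)
  simp only [SimpleGraph.Walk.edges_cons, SimpleGraph.Walk.edges_nil,
    List.mem_cons, List.not_mem_nil, or_false] at he
  rcases he with rfl | rfl
  · exact Or.inl heS
  · exact Or.inr heS

private lemma md_hit3 {u v a b : V}
    (h : ¬ (G.deleteEdges {e | c e = i}).Reachable u v)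
    (h1 : G.Adj u a) (h2 : G.Adj a b) (h3 : G.Adj b v) :
    c s(u, a) = i ∨ c s(a, b) = i ∨ c s(b, v) = i := by
  obtain ⟨e, he, heS⟩ := md_walk_hit h
    (SimpleGraph.Walk.cons h1 (SimpleGraph.Walk.cons h2 h3.toWalk))
  simp only [SimpleGraph.Walk.edges_cons, SimpleGraph.Walk.edges_nil,
    List.mem_cons, List.not_mem_nil, or_false] at he
  rcases he with rfl | rfl | rfl
  · exact Or.inl heS
  · exact Or.inr (Or.inl heS)
  · exact Or.inr (Or.inr heS)

/-- All edges of a triangle get the same color in an MD-coloring. -/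
private lemma md_triangle (hc : isMDColoring G c) {u v w : V}
    (huv : G.Adj u v) (hvw : G.Adj v w) (huw : G.Adj u w) :
    c s(u, v) = c s(v, w) ∧ c s(u, v) = c s(u, w) := by
  have sw : ∀ a b : V, c s(a, b) = c s(b, a) := fun a b => by rw [Sym2.eq_swap]
  obtain ⟨i, hi⟩ := hc u v huv.ne
  obtain ⟨j, hj⟩ := hc v w hvw.ne
  obtain ⟨k, hk⟩ := hc u w huw.ne
  have h1 := md_hit1 hi huv
  have h2 := md_hit2 hi huw hvw.symm
  have h3 := md_hit1 hj hvw
  have h4 := md_hit2 hj huv.symm huw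
  have h5 := md_hit1 hk huw
  have h6 := md_hit2 hk huv hvw
  rw [sw w v] at h2
  rw [sw v u] at h4
  omega

set_option maxHeartbeats 1600000 in
/-- All edges of a K_{2,3} get the same color in an MD-coloring. -/
private lemma md_k23 (hc : isMDColoring G c) {x y p q r : V}
    (hxy : x ≠ y) (hpq : p ≠ q) (hpr : p ≠ r) (hqr : q ≠ r)
    (hxp : G.Adj x p) (hxq : G.Adj x q) (hxr : G.Adj x r)
    (hyp : G.Adj y p) (hyq : G.Adj y q) (hyr : G.Adj y r) :
    c s(x, p) = c s(x, q) ∧ c s(x, p) = c s(x, r) ∧ c s(x, p) = c s(y, p) ∧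
      c s(x, p) = c s(y, q) ∧ c s(x, p) = c s(y, r) := by
  have sw : ∀ a b : V, c s(a, b) = c s(b, a) := fun a b => by rw [Sym2.eq_swap]
  -- pair (x,y)
  obtain ⟨i0, h0⟩ := hc x y hxy
  have hXYp := md_hit2 h0 hxp hyp.symm
  have hXYq := md_hit2 h0 hxq hyq.symm
  have hXYr := md_hit2 h0 hxr hyr.symm
  rw [sw p y] at hXYp; rw [sw q y] at hXYq; rw [sw r y] at hXYr
  -- pair (x,p)
  obtain ⟨ip, hp'⟩ := hc x p hxp.ne
  have ep := md_hit1 hp' hxp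
  have XZpq := md_hit3 hp' hxq hyq.symm hyp
  have XZpr := md_hit3 hp' hxr hyr.symm hyp
  rw [sw q y] at XZpq; rw [sw r y] at XZpr
  subst ep
  -- pair (x,q)
  obtain ⟨iq, hq'⟩ := hc x q hxq.ne
  have eq' := md_hit1 hq' hxq
  have XZqp := md_hit3 hq' hxp hyp.symm hyq
  have XZqr := md_hit3 hq' hxr hyr.symm hyq
  rw [sw p y] at XZqp; rw [sw r y] at XZqr
  subst eq'
  -- pair (x,r)
  obtain ⟨ir, hr'⟩ := hc x r hxr.ne
  have er := md_hit1 hr' hxr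
  have XZrp := md_hit3 hr' hxp hyp.symm hyr
  have XZrq := md_hit3 hr' hxq hyq.symm hyr
  rw [sw p y] at XZrp; rw [sw q y] at XZrq
  subst er
  -- pair (y,p)
  obtain ⟨jp, kp'⟩ := hc y p hyp.ne
  have fp := md_hit1 kp' hyp
  have YZpq := md_hit3 kp' hyq hxq.symm hxp
  have YZpr := md_hit3 kp' hyr hxr.symm hxp
  rw [sw q x] at YZpq; rw [sw r x] at YZpr
  subst fp
  -- pair (y,q)
  obtain ⟨jq, kq'⟩ := hc y q hyq.ne
  have fq := md_hit1 kq' hyq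
  have YZqp := md_hit3 kq' hyp hxp.symm hxq
  have YZqr := md_hit3 kq' hyr hxr.symm hxq
  rw [sw p x] at YZqp; rw [sw r x] at YZqr
  subst fq
  -- pair (y,r)
  obtain ⟨jr, kr'⟩ := hc y r hyr.ne
  have fr := md_hit1 kr' hyr
  have YZrp := md_hit3 kr' hyp hxp.symm hxr
  have YZrq := md_hit3 kr' hyq hxq.symm hxr
  rw [sw p x] at YZrp; rw [sw q x] at YZrq
  subst fr
  -- pair (p,q)
  obtain ⟨j1, g1⟩ := hc p q hpq
  have ZWpq1 := md_hit2 g1 hxp.symm hxq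
  have ZWpq2 := md_hit2 g1 hyp.symm hyq
  rw [sw p x] at ZWpq1; rw [sw p y] at ZWpq2
  -- pair (p,r)
  obtain ⟨j2, g2⟩ := hc p r hpr
  have ZWpr1 := md_hit2 g2 hxp.symm hxr
  have ZWpr2 := md_hit2 g2 hyp.symm hyr
  rw [sw p x] at ZWpr1; rw [sw p y] at ZWpr2
  -- pair (q,r)
  obtain ⟨j3, g3⟩ := hc q r hqr
  have ZWqr1 := md_hit2 g3 hxq.symm hxr
  have ZWqr2 := md_hit2 g3 hyq.symm hyr
  rw [sw q x] at ZWqr1; rw [sw q y] at ZWqr2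
  -- derive the three vertical equalities
  have Ep : c s(x, p) = c s(y, p) := by
    rcases hXYp with h | h
    · subst h
      exact md_core2 _ _ _ _ _ _ _ _ _ hXYq hXYr YZpq YZpr XZrq XZqr
        ZWpq1 ZWpq2 ZWpr1 ZWpr2 ZWqr1 ZWqr2
    · subst h
      exact (md_core2 _ _ _ _ _ _ _ _ _ hXYq.symm hXYr.symm XZpq XZpr YZrq YZqr
        ZWpq2 ZWpq1 ZWpr2 ZWpr1 ZWqr2 ZWqr1).symm
  have Eq2 : c s(x, q) = c s(y, q) := by
    rcases hXYq with h | h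
    · subst h
      exact md_core2 _ _ _ _ _ _ _ _ _ hXYp hXYr YZqp YZqr XZrp XZpr
        ZWpq1.symm ZWpq2.symm ZWqr1 ZWqr2 ZWpr1 ZWpr2
    · subst h
      exact (md_core2 _ _ _ _ _ _ _ _ _ hXYp.symm hXYr.symm XZqp XZqr YZrp YZpr
        ZWpq2.symm ZWpq1.symm ZWqr2 ZWqr1 ZWpr2 ZWpr1).symm
  have Er : c s(x, r) = c s(y, r) := by
    rcases hXYr with h | h
    · subst h
      exact md_core2 _ _ _ _ _ _ _ _ _ hXYq hXYp YZrq YZrp XZpq XZqp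
        ZWqr1.symm ZWqr2.symm ZWpr1.symm ZWpr2.symm ZWpq1.symm ZWpq2.symm
    · subst h
      exact (md_core2 _ _ _ _ _ _ _ _ _ hXYq.symm hXYp.symm XZrq XZrp YZpq YZqp
        ZWqr2.symm ZWqr1.symm ZWpr2.symm ZWpr1.symm ZWpq2.symm ZWpq1.symm).symm
  exact md_fin _ _ _ _ _ _ _ hXYp hXYq hXYr Ep Eq2 Er

/-- Edges in a subgraph isomorphic to K_3 or K_{2,3} all get the same color. -/
private lemma md_subgraph_mono (hc : isMDColoring G c) (H : G.Subgraph)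
    (hiso : Nonempty (H.coe ≃g (⊤ : SimpleGraph (Fin 3))) ∨
      Nonempty (H.coe ≃g completeBipartiteGraph (Fin 2) (Fin 3))) :
    ∀ e ∈ H.edgeSet, ∀ e' ∈ H.edgeSet, c e = c e' := by
  have sw : ∀ a b : V, c s(a, b) = c s(b, a) := fun a b => by rw [Sym2.eq_swap]
  rcases hiso with hiso | hiso
  · -- K3 case
    obtain ⟨φ⟩ := hiso
    set u : Fin 3 → V := fun k => ((φ.symm k : H.verts) : V) with hu
    have hA : ∀ m n : Fin 3, m ≠ n → G.Adj (u m) (u n) := by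
      intro m n hmn
      have h1 : H.coe.Adj (φ.symm m) (φ.symm n) :=
        φ.symm.map_rel_iff.mpr ((SimpleGraph.top_adj m n).mpr hmn)
      rw [SimpleGraph.Subgraph.coe_adj] at h1
      exact H.adj_sub h1
    have T := md_triangle hc (hA 0 1 (by decide)) (hA 1 2 (by decide)) (hA 0 2 (by decide))
    have G3 : ∀ k1 k2 : Fin 3, k1 ≠ k2 →
        c s(u k1, u k2) = c s(u 0, u 1) := by
      intro k1 k2 hk
      fin_cases k1 <;> fin_cases k2 <;>
        first
          | exact (hk rfl).elim
          | exact rfl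
          | exact sw _ _
          | exact T.1.symm
          | exact (sw _ _).trans T.1.symm
          | exact T.2.symm
          | exact (sw _ _).trans T.2.symm
    have key : ∀ e ∈ H.edgeSet, c e = c s(u 0, u 1) := by
      intro e he
      induction e using Sym2.ind with
      | _ a b =>
        rw [SimpleGraph.Subgraph.mem_edgeSet] at he
        have hadj : H.coe.Adj ⟨a, H.edge_vert he⟩ ⟨b, H.edge_vert he.symm⟩ := by
          rw [SimpleGraph.Subgraph.coe_adj]; exact he
        have hne : φ ⟨a, H.edge_vert he⟩ ≠ φ ⟨b, H.edge_vert he.symm⟩ :=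
          ((SimpleGraph.top_adj _ _).mp (φ.map_rel_iff.mpr hadj))
        have h1 : c s(a, b) =
            c s(u (φ ⟨a, H.edge_vert he⟩), u (φ ⟨b, H.edge_vert he.symm⟩)) := by
          simp only [hu, RelIso.symm_apply_apply]
        exact h1.trans (G3 _ _ hne)
    exact fun e he e' he' => (key e he).trans (key e' he').symm
  · -- K_{2,3} case
    obtain ⟨φ⟩ := hiso
    set X : Fin 2 → V := fun m => ((φ.symm (Sum.inl m) : H.verts) : V) with hX
    set Y : Fin 3 → V := fun n => ((φ.symm (Sum.inr n) : H.verts) : V) with hY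
    have hA : ∀ (m : Fin 2) (n : Fin 3), G.Adj (X m) (Y n) := by
      intro m n
      have h1 : H.coe.Adj (φ.symm (Sum.inl m)) (φ.symm (Sum.inr n)) :=
        φ.symm.map_rel_iff.mpr (by simp)
      rw [SimpleGraph.Subgraph.coe_adj] at h1
      exact H.adj_sub h1
    have hXne : X 0 ≠ X 1 := by
      intro h
      have := φ.symm.injective (Subtype.ext h)
      simp at this
    have hYne : ∀ n n' : Fin 3, n ≠ n' → Y n ≠ Y n' := by
      intro n n' hnn h
      exact hnn (Sum.inr_injective (φ.symm.injective (Subtype.ext h)))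
    have K := md_k23 hc hXne (hYne 0 1 (by decide)) (hYne 0 2 (by decide))
      (hYne 1 2 (by decide)) (hA 0 0) (hA 0 1) (hA 0 2) (hA 1 0) (hA 1 1) (hA 1 2)
    have G6 : ∀ (m : Fin 2) (n : Fin 3), c s(X m, Y n) = c s(X 0, Y 0) := by
      intro m n
      fin_cases m <;> fin_cases n <;>
        first
          | exact rfl
          | exact K.1.symm
          | exact K.2.1.symm
          | exact K.2.2.1.symm
          | exact K.2.2.2.1.symm
          | exact K.2.2.2.2.symm
    have G' : ∀ s1 s2 : Fin 2 ⊕ Fin 3, (completeBipartiteGraph (Fin 2) (Fin 3)).Adj s1 s2 →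
        c s(((φ.symm s1 : H.verts) : V), ((φ.symm s2 : H.verts) : V)) = c s(X 0, Y 0) := by
      rintro (m1 | n1) (m2 | n2) hadj
      · simp at hadj
      · exact G6 m1 n2
      · exact (sw _ _).trans (G6 m2 n1)
      · simp at hadj
    have key : ∀ e ∈ H.edgeSet, c e = c s(X 0, Y 0) := by
      intro e he
      induction e using Sym2.ind with
      | _ a b =>
        rw [SimpleGraph.Subgraph.mem_edgeSet] at he
        have hadj : H.coe.Adj ⟨a, H.edge_vert he⟩ ⟨b, H.edge_vert he.symm⟩ := by
          rw [SimpleGraph.Subgraph.coe_adj]; exact he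
        have hφ : (completeBipartiteGraph (Fin 2) (Fin 3)).Adj
            (φ ⟨a, H.edge_vert he⟩) (φ ⟨b, H.edge_vert he.symm⟩) :=
          φ.map_rel_iff.mpr hadj
        have h1 : c s(a, b) =
            c s(((φ.symm (φ ⟨a, H.edge_vert he⟩) : H.verts) : V),
                ((φ.symm (φ ⟨b, H.edge_vert he.symm⟩) : H.verts) : V)) := by
          simp only [RelIso.symm_apply_apply]
        exact h1.trans (G' _ _ hφ)
    exact fun e he e' he' => (key e he).trans (key e' he').symm

end Lemmas

theorem closure_md {V : Type*} [Fintype V] (G : SimpleGraph V) (hG : G.Connected)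
    (hne : G.edgeSet.Nonempty)
    (hclo : ∀ e ∈ G.edgeSet, ∀ e' ∈ G.edgeSet, ∃ (k : ℕ) (f : Fin (k + 1) → G.Subgraph),
      (∀ i, Nonempty ((f i).coe ≃g (⊤ : SimpleGraph (Fin 3))) ∨
        Nonempty ((f i).coe ≃g completeBipartiteGraph (Fin 2) (Fin 3))) ∧
      e ∈ (f 0).edgeSet ∧ e' ∈ (f (Fin.last k)).edgeSet ∧
      ∀ i : Fin k, ((f i.castSucc).edgeSet ∩ (f i.succ).edgeSet).Nonempty) :
    mdNum G = 1 := by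
  classical
  obtain ⟨e₀, he₀⟩ := hne
  have const : ∀ cc : Sym2 V → ℕ, isMDColoring G cc →
      ∀ e ∈ G.edgeSet, ∀ e' ∈ G.edgeSet, cc e = cc e' := by
    intro cc hcc e he e' he'
    obtain ⟨k, f, hiso, he0, helast, hchain⟩ := hclo e he e' he'
    have hmono : ∀ i, ∀ a ∈ (f i).edgeSet, ∀ b ∈ (f i).edgeSet, cc a = cc b :=
      fun i => md_subgraph_mono hcc (f i) (hiso i)
    have main : ∀ i : Fin (k + 1), ∀ b ∈ (f i).edgeSet, cc e = cc b := by
      intro i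
      induction i using Fin.induction with
      | zero => exact fun b hb => hmono 0 e he0 b hb
      | succ i ih =>
        obtain ⟨g, hg1, hg2⟩ := hchain i
        exact fun b hb => (ih g hg1).trans (hmono i.succ g hg2 b hb)
    exact main (Fin.last k) e' helast
  have hset : {n | ∃ c : Sym2 V → ℕ, isMDColoring G c ∧ (c '' G.edgeSet).ncard = n} = {1} := by
    ext n
    simp only [Set.mem_setOf_eq, Set.mem_singleton_iff]
    constructor
    · rintro ⟨c, hc, rfl⟩
      have himg : c '' G.edgeSet = {c e₀} := by
        apply Set.eq_singleton_iff_unique_mem.mpr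
        refine ⟨⟨e₀, he₀, rfl⟩, ?_⟩
        rintro y ⟨e, he, rfl⟩
        exact const c hc e he e₀ he₀
      rw [himg, Set.ncard_singleton]
    · rintro rfl
      refine ⟨fun _ => 0, ?_, ?_⟩
      · intro u v huv
        refine ⟨0, ?_⟩
        have hdel : G.deleteEdges {e : Sym2 V | (fun _ => (0 : ℕ)) e = 0} = ⊥ := by
          ext a b
          simp [SimpleGraph.deleteEdges_adj]
        rw [hdel, SimpleGraph.reachable_bot]
        exact huv
      · rw [Set.Nonempty.image_const ⟨e₀, he₀⟩ 0, Set.ncard_singleton]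
  rw [mdNum, hset, csSup_singleton]
end

section
/- Let G be a connected graph and v a vertex of G that is neither a pendent vertex (degree 1) nor a cut-vertex. Then md(G) ≤ md(G - v). -/
theorem delete_vertex_md {V : Type*} [Fintype V] [DecidableEq V]
    (G : SimpleGraph V) [DecidableRel G.Adj] (hG : G.Connected) (v : V)
    (hpend : G.degree v ≠ 1)
    (hcut : (G.induce ({v}ᶜ : Set V)).Connected) :
    mdNum G ≤ mdNum (G.induce ({v}ᶜ : Set V)) := by
  classical
  set H := G.induce ({v}ᶜ : Set V) with hHdef
  rw [mdNum, mdNum]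
  apply csSup_le'
  rintro n ⟨c, hc, rfl⟩
  -- Key claim: every color used in G appears on an edge avoiding v.
  have claim1' : ∀ p q : V, G.Adj p q →
      ∃ a b : V, G.Adj a b ∧ a ≠ v ∧ b ≠ v ∧ c s(a, b) = c s(p, q) := by
    intro p q hpq
    by_contra hcon
    push_neg at hcon
    -- hcon : ∀ a b, G.Adj a b → a ≠ v → b ≠ v → c s(a,b) ≠ c s(p,q)
    set i := c s(p, q) with hidef
    -- find a neighbor x of v whose edge has color i
    have hx : ∃ x, G.Adj v x ∧ c s(v, x) = i := by
      by_cases hp : p = v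
      · refine ⟨q, hp ▸ hpq, ?_⟩
        rw [hp] at hidef
        exact hidef.symm
      · by_cases hq : q = v
        · refine ⟨p, hq ▸ hpq.symm, ?_⟩
          rw [hq] at hidef
          rw [Sym2.eq_swap]
          exact hidef.symm
        · exact absurd rfl (hcon p q hpq hp hq)
    obtain ⟨x, hvx_adj, hcx⟩ := hx
    -- a homomorphism from H into G minus the class-i edges
    have hψadj : ∀ a b : ({v}ᶜ : Set V), H.Adj a b →
        (G.deleteEdges {f | c f = i}).Adj a.val b.val := by
      intro a b hab
      have hadj : G.Adj a.val b.val := hab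
      rw [SimpleGraph.deleteEdges_adj]
      refine ⟨hadj, fun hmem => ?_⟩
      exact hcon a.val b.val hadj (fun h => a.2 (by simp [h])) (fun h => b.2 (by simp [h])) hmem
    let ψ : H →g (G.deleteEdges {f | c f = i}) :=
      ⟨fun a => a.val, fun hab => hψadj _ _ hab⟩
    -- deleting class i disconnects v from x
    obtain ⟨j, hj⟩ := hc v x hvx_adj.ne
    have hji : j = i := by
      by_contra hji
      apply hj
      apply SimpleGraph.Adj.reachable
      rw [SimpleGraph.deleteEdges_adj]
      refine ⟨hvx_adj, fun hmem => hji ?_⟩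
      rw [Set.mem_setOf_eq] at hmem
      exact hmem.symm.trans hcx
    subst hji
    -- every edge at v has color j (= i)
    have hall : ∀ y, G.Adj v y → c s(v, y) = i := by
      intro y hy
      by_contra hne
      apply hj
      have h1 : (G.deleteEdges {f | c f = i}).Adj v y := by
        rw [SimpleGraph.deleteEdges_adj]
        exact ⟨hy, fun hmem => hne hmem⟩
      have hy' : (y : V) ∈ ({v}ᶜ : Set V) := by simp [hy.ne']
      have hx' : (x : V) ∈ ({v}ᶜ : Set V) := by simp [hvx_adj.ne']
      have h2 : H.Reachable ⟨y, hy'⟩ ⟨x, hx'⟩ := hcut.preconnected _ _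
      exact h1.reachable.trans (h2.map ψ)
    -- v has a second neighbor y ≠ x
    have hdeg : 1 < G.degree v := by
      have h0 : 0 < G.degree v := (G.degree_pos_iff_exists_adj v).mpr ⟨x, hvx_adj⟩
      omega
    obtain ⟨y, hymem, hyx⟩ := Finset.exists_mem_ne hdeg x
    have hyadj : G.Adj v y := (SimpleGraph.mem_neighborFinset G v y).mp hymem
    -- x and y cannot be separated monochromatically: contradiction
    obtain ⟨k, hk⟩ := hc x y hyx.symm
    by_cases hki : k = i
    · subst hki
      apply hk
      have hx' : (x : V) ∈ ({v}ᶜ : Set V) := by simp [hvx_adj.ne']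
      have hy' : (y : V) ∈ ({v}ᶜ : Set V) := by simp [hyadj.ne']
      exact (hcut.preconnected ⟨x, hx'⟩ ⟨y, hy'⟩).map ψ
    · apply hk
      have e1 : (G.deleteEdges {f | c f = k}).Adj x v := by
        rw [SimpleGraph.deleteEdges_adj]
        refine ⟨hvx_adj.symm, fun hmem => hki ?_⟩
        rw [Set.mem_setOf_eq] at hmem
        have : c s(x, v) = i := by rw [Sym2.eq_swap]; exact hcx
        exact hmem.symm.trans this
      have e2 : (G.deleteEdges {f | c f = k}).Adj v y := by
        rw [SimpleGraph.deleteEdges_adj]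
        refine ⟨hyadj, fun hmem => hki ?_⟩
        rw [Set.mem_setOf_eq] at hmem
        exact hmem.symm.trans (hall y hyadj)
      exact e1.reachable.trans e2.reachable
  have claim1 : ∀ e ∈ G.edgeSet,
      ∃ a b : V, G.Adj a b ∧ a ≠ v ∧ b ≠ v ∧ c s(a, b) = c e := by
    intro e
    refine Sym2.ind (fun p q hpq => ?_) e
    exact claim1' p q ((SimpleGraph.mem_edgeSet G).mp hpq)
  -- the restricted coloring
  set c' : Sym2 ({v}ᶜ : Set V) → ℕ := fun e => c (Sym2.map Subtype.val e) with hc'def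
  have hc'md : isMDColoring H c' := by
    intro u w huw
    obtain ⟨i, hi⟩ := hc u.val w.val (Subtype.coe_injective.ne huw)
    refine ⟨i, fun hr => hi ?_⟩
    have hφadj : ∀ a b : ({v}ᶜ : Set V), (H.deleteEdges {e | c' e = i}).Adj a b →
        (G.deleteEdges {e | c e = i}).Adj a.val b.val := by
      intro a b hab
      rw [SimpleGraph.deleteEdges_adj] at hab
      obtain ⟨hab, hmem⟩ := hab
      rw [SimpleGraph.deleteEdges_adj]
      refine ⟨hab, fun hm => hmem ?_⟩
      rw [Set.mem_setOf_eq] at hm ⊢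
      rw [hc'def]
      simpa using hm
    let φ : (H.deleteEdges {e | c' e = i}) →g (G.deleteEdges {e | c e = i}) :=
      ⟨fun a => a.val, fun hab => hφadj _ _ hab⟩
    exact hr.map φ
  have hsub : c '' G.edgeSet ⊆ c' '' H.edgeSet := by
    rintro n ⟨e, he, rfl⟩
    obtain ⟨a, b, hab, hav, hbv, hcab⟩ := claim1 e he
    have ha' : a ∈ ({v}ᶜ : Set V) := by simp [hav]
    have hb' : b ∈ ({v}ᶜ : Set V) := by simp [hbv]
    have hH : H.Adj ⟨a, ha'⟩ ⟨b, hb'⟩ := hab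
    refine ⟨s(⟨a, ha'⟩, ⟨b, hb'⟩), (SimpleGraph.mem_edgeSet H).mpr hH, ?_⟩
    rw [hc'def]
    simpa using hcab
  have hbdd : BddAbove {n | ∃ c'' : Sym2 ({v}ᶜ : Set V) → ℕ,
      isMDColoring H c'' ∧ (c'' '' H.edgeSet).ncard = n} := by
    refine ⟨(Set.univ : Set (Sym2 ({v}ᶜ : Set V))).ncard, ?_⟩
    rintro n ⟨c'', _, rfl⟩
    calc (c'' '' H.edgeSet).ncard ≤ H.edgeSet.ncard := Set.ncard_image_le (Set.toFinite _)
      _ ≤ _ := Set.ncard_le_ncard (Set.subset_univ _) (Set.toFinite _)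
  calc (c '' G.edgeSet).ncard ≤ (c' '' H.edgeSet).ncard :=
        Set.ncard_le_ncard hsub (Set.toFinite _)
    _ ≤ _ := le_csSup hbdd ⟨c', hc'md, rfl⟩
end

section
/- For a connected graph G and any integer r with 1 ≤ r ≤ md(G), there exists an MD-coloring of G using exactly r colors. -/
theorem md_coloring_exists {V : Type*} [Fintype V] (G : SimpleGraph V)
    (hG : G.Connected) (r : ℕ) (h1 : 1 ≤ r) (h2 : r ≤ mdNum G) :
    ∃ c : Sym2 V → ℕ, isMDColoring G c ∧ (c '' G.edgeSet).ncard = r := by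
  classical
  set S := {n | ∃ c : Sym2 V → ℕ, isMDColoring G c ∧ (c '' G.edgeSet).ncard = n} with hS
  have hbdd : BddAbove S := by
    refine ⟨G.edgeSet.ncard, ?_⟩
    rintro n ⟨c, _, rfl⟩
    exact Set.ncard_image_le G.edgeSet.toFinite
  have hne : S.Nonempty := by
    by_contra h
    rw [Set.not_nonempty_iff_eq_empty] at h
    have : mdNum G = 0 := by
      unfold mdNum
      rw [← hS, h, csSup_empty]
      rfl
    omega
  have hmem : mdNum G ∈ S := Nat.sSup_mem hne hbdd
  obtain ⟨c, hc, hn⟩ := hmem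
  -- pick r colors
  obtain ⟨B, hBsub, hBcard⟩ := Set.exists_subset_card_eq (s := c '' G.edgeSet) (n := r) (by rw [hn]; exact h2)
  have hBne : B.Nonempty := Set.nonempty_of_ncard_ne_zero (by omega)
  obtain ⟨b0, hb0⟩ := hBne
  set f : ℕ → ℕ := fun i => if i ∈ B then i else b0 with hf
  refine ⟨f ∘ c, ?_, ?_⟩
  · intro u v huv
    obtain ⟨j, hj⟩ := hc u v huv
    refine ⟨f j, fun hr => hj ?_⟩
    refine hr.mono (SimpleGraph.deleteEdges_anti ?_)
    intro e he
    simp only [Set.mem_setOf_eq, Function.comp_apply] at *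
    rw [he]
  · have himg : (f ∘ c) '' G.edgeSet = B := by
      apply Set.Subset.antisymm
      · rintro x ⟨e, he, rfl⟩
        simp only [Function.comp_apply, hf]
        split
        · assumption
        · exact hb0
      · intro b hb
        obtain ⟨e, he, rfl⟩ := hBsub hb
        exact ⟨e, he, by simp [hf, hb]⟩
    rw [himg, hBcard]
end

section
/- If G is a connected graph on n vertices with minimum degree δ(G) ≥ ⌊n/2⌋ + 1, then md(G) = 1. -/
/-- Auxiliary lemma: if `H1`, `H2` are graphs such that no two distinct vertices
are reachable in both, and every vertex's two "component" classes together have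
at least `n/2 + 3` elements, then any nontrivial `H1`-class has at least
`n/2 + 2` elements. -/
lemma classSize_aux {V : Type*} [Fintype V] [DecidableEq V] (H1 H2 : SimpleGraph V)
    (A B : V → Finset V)
    (hA : ∀ u v, v ∈ A u ↔ H1.Reachable u v)
    (hB : ∀ u v, v ∈ B u ↔ H2.Reachable u v)
    (K : ∀ v w, H1.Reachable v w → H2.Reachable v w → v = w)
    (hsum : ∀ u, Fintype.card V / 2 + 3 ≤ (A u).card + (B u).card)
    (u x : V) (hux : H1.Reachable u x) (hne : u ≠ x) :
    Fintype.card V / 2 + 2 ≤ (A u).card := by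
  classical
  set n := Fintype.card V with hn
  set h := n / 2 with hh
  set s := (A u).card with hs
  have hu : u ∈ A u := (hA u u).mpr (SimpleGraph.Reachable.refl u)
  have hx : x ∈ A u := (hA u x).mpr hux
  have hs2 : 2 ≤ s := Finset.one_lt_card.mpr ⟨u, hu, x, hx, hne⟩
  have hAeq : ∀ v ∈ A u, A v = A u := by
    intro v hv
    have huv : H1.Reachable u v := (hA u v).mp hv
    ext w
    simp only [hA]
    exact ⟨fun hw => huv.trans hw, fun hw => huv.symm.trans hw⟩
  have hdisj : ∀ v ∈ A u, ∀ w ∈ A u, v ≠ w → Disjoint (B v) (B w) := by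
    intro v hv w hw hvw
    rw [Finset.disjoint_left]
    intro a hav haw
    have h2 : H2.Reachable v w := ((hB v a).mp hav).trans ((hB w a).mp haw).symm
    have h1 : H1.Reachable v w := ((hA u v).mp hv).symm.trans ((hA u w).mp hw)
    exact hvw (K v w h1 h2)
  have hsum2 : ∑ v ∈ A u, (B v).card ≤ n := by
    rw [← Finset.card_biUnion hdisj]
    exact le_of_le_of_eq (Finset.card_le_univ _) (Finset.card_univ)
  have hsum1 : ∑ v ∈ A u, ((A v).card + (B v).card)
      = s * s + ∑ v ∈ A u, (B v).card := by
    rw [Finset.sum_add_distrib]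
    congr 1
    rw [Finset.sum_congr rfl (fun v hv => by rw [hAeq v hv])]
    simp [mul_comm]
    rfl
  have hlow : s * (h + 3) ≤ ∑ v ∈ A u, ((A v).card + (B v).card) := by
    have := Finset.card_nsmul_le_sum (A u) (fun v => (A v).card + (B v).card)
      (h + 3) (fun v _ => hsum v)
    simpa [smul_eq_mul] using this
  have hmain : s * (h + 3) ≤ s * s + n := by
    refine hlow.trans ?_
    rw [hsum1]
    omega
  have hn2 : n ≤ 2 * h + 1 := by omega
  by_contra hcon
  push_neg at hcon
  have hcon' : s ≤ h + 1 := by omega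
  have h1 : (2:ℤ) ≤ (s:ℤ) := by exact_mod_cast hs2
  have h2 : (s:ℤ) ≤ (h:ℤ) + 1 := by exact_mod_cast hcon'
  have h3 : (s:ℤ) * ((h:ℤ) + 3) ≤ (s:ℤ) * (s:ℤ) + (n:ℤ) := by exact_mod_cast hmain
  have h4 : (n:ℤ) ≤ 2 * (h:ℤ) + 1 := by exact_mod_cast hn2
  nlinarith [mul_nonneg (by linarith : (0:ℤ) ≤ (s:ℤ) - 2)
    (by linarith : (0:ℤ) ≤ (h:ℤ) + 1 - (s:ℤ))]

theorem minDegree_md {V : Type*} [Fintype V] [Nonempty V] (G : SimpleGraph V)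
    [DecidableRel G.Adj] (hG : G.Connected)
    (hδ : Fintype.card V / 2 + 1 ≤ G.minDegree) : mdNum G = 1 := by
  classical
  set n := Fintype.card V with hn
  -- G has an edge
  obtain ⟨v0⟩ := ‹Nonempty V›
  have hd0 : 0 < G.degree v0 := lt_of_lt_of_le (by omega : 0 < n / 2 + 1)
    (hδ.trans (G.minDegree_le_degree v0))
  obtain ⟨w0, hw0⟩ := (G.degree_pos_iff_exists_adj v0).mp hd0
  have hEdge : G.edgeSet.Nonempty := ⟨s(v0, w0), hw0⟩
  -- all edges get the same color in any MD-coloring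
  have key : ∀ c : Sym2 V → ℕ, isMDColoring G c →
      ∀ e1 ∈ G.edgeSet, ∀ e2 ∈ G.edgeSet, c e1 = c e2 := by
    intro c hc e1 he1 e2 he2
    by_contra hnecol
    obtain ⟨x1, y1, hxy1, rfl⟩ : ∃ x y, G.Adj x y ∧ e1 = s(x, y) := by
      induction e1 using Sym2.ind with
      | _ x y => exact ⟨x, y, he1, rfl⟩
    obtain ⟨x2, y2, hxy2, rfl⟩ : ∃ x y, G.Adj x y ∧ e2 = s(x, y) := by
      induction e2 using Sym2.ind with
      | _ x y => exact ⟨x, y, he2, rfl⟩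
    set i := c s(x1, y1) with hi
    set H1 := G.deleteEdges {e | ¬ c e = i} with hH1
    set H2 := G.deleteEdges {e | c e = i} with hH2
    have hK : ∀ v w, H1.Reachable v w → H2.Reachable v w → v = w := by
      intro v w h1 h2
      by_contra hvw
      obtain ⟨j, hj⟩ := hc v w hvw
      by_cases hji : j = i
      · exact hj (by rw [hji]; exact h2)
      · refine hj (h1.mono (SimpleGraph.deleteEdges_anti ?_))
        intro e he
        simp only [Set.mem_setOf_eq] at he ⊢
        rw [he]; exact hji
    set A : V → Finset V := fun u => Finset.univ.filter (fun v => H1.Reachable u v) with hAdef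
    set B : V → Finset V := fun u => Finset.univ.filter (fun v => H2.Reachable u v) with hBdef
    have hA : ∀ u v, v ∈ A u ↔ H1.Reachable u v := by
      intro u v; simp [hAdef]
    have hB : ∀ u v, v ∈ B u ↔ H2.Reachable u v := by
      intro u v; simp [hBdef]
    have hsum : ∀ u, n / 2 + 3 ≤ (A u).card + (B u).card := by
      intro u
      have hNsub : insert u (G.neighborFinset u) ⊆ A u ∪ B u := by
        intro w hw
        rcases Finset.mem_insert.mp hw with rfl | hw
        · exact Finset.mem_union_left _ ((hA _ _).mpr (SimpleGraph.Reachable.refl _))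
        · have hadj : G.Adj u w := (SimpleGraph.mem_neighborFinset G u w).mp hw
          by_cases hcw : c s(u, w) = i
          · refine Finset.mem_union_left _ ((hA u w).mpr ?_)
            refine SimpleGraph.Adj.reachable ?_
            rw [hH1, SimpleGraph.deleteEdges_adj]
            exact ⟨hadj, by simp [hcw]⟩
          · refine Finset.mem_union_right _ ((hB u w).mpr ?_)
            refine SimpleGraph.Adj.reachable ?_
            rw [hH2, SimpleGraph.deleteEdges_adj]
            exact ⟨hadj, by simp [hcw]⟩
      have hcard1 : G.degree u + 1 ≤ (A u ∪ B u).card := by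
        have hle := Finset.card_le_card hNsub
        rwa [Finset.card_insert_of_notMem (by simp), SimpleGraph.card_neighborFinset_eq_degree]
          at hle
      have hinter : 1 ≤ (A u ∩ B u).card := by
        refine Finset.card_pos.mpr ⟨u, Finset.mem_inter.mpr ⟨?_, ?_⟩⟩
        · exact (hA u u).mpr (SimpleGraph.Reachable.refl u)
        · exact (hB u u).mpr (SimpleGraph.Reachable.refl u)
      have hiu := Finset.card_union_add_card_inter (A u) (B u)
      have hdeg : n / 2 + 1 ≤ G.degree u := hδ.trans (G.minDegree_le_degree u)
      omega
    have hr1 : H1.Reachable x1 y1 := by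
      refine SimpleGraph.Adj.reachable ?_
      rw [hH1, SimpleGraph.deleteEdges_adj]
      exact ⟨hxy1, by simp [hi]⟩
    have hr2 : H2.Reachable x2 y2 := by
      refine SimpleGraph.Adj.reachable ?_
      rw [hH2, SimpleGraph.deleteEdges_adj]
      refine ⟨hxy2, ?_⟩
      simp only [Set.mem_setOf_eq]
      exact fun hcon => hnecol (by rw [hcon])
    have big1 : n / 2 + 2 ≤ (A x1).card :=
      classSize_aux H1 H2 A B hA hB hK hsum x1 y1 hr1 hxy1.ne
    have big2 : n / 2 + 2 ≤ (B x2).card :=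
      classSize_aux H2 H1 B A hB hA (fun v w h2 h1 => hK v w h1 h2)
        (fun u => by have := hsum u; omega) x2 y2 hr2 hxy2.ne
    have hint : (A x1 ∩ B x2).card ≤ 1 := by
      refine Finset.card_le_one.mpr ?_
      intro a ha b hb
      obtain ⟨ha1, ha2⟩ := Finset.mem_inter.mp ha
      obtain ⟨hb1, hb2⟩ := Finset.mem_inter.mp hb
      exact hK a b (((hA x1 a).mp ha1).symm.trans ((hA x1 b).mp hb1))
        (((hB x2 a).mp ha2).symm.trans ((hB x2 b).mp hb2))
    have hiu := Finset.card_union_add_card_inter (A x1) (B x2)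
    have hun : (A x1 ∪ B x2).card ≤ n :=
      le_of_le_of_eq (Finset.card_le_univ _) (Finset.card_univ)
    omega
  -- the set of achievable color counts is exactly {1}
  have hSet : {m | ∃ c : Sym2 V → ℕ, isMDColoring G c ∧ (c '' G.edgeSet).ncard = m}
      = {1} := by
    ext m
    simp only [Set.mem_setOf_eq, Set.mem_singleton_iff]
    constructor
    · rintro ⟨c, hc, rfl⟩
      have hss : (c '' G.edgeSet).Subsingleton := by
        rintro a ⟨e1, he1, rfl⟩ b ⟨e2, he2, rfl⟩
        exact key c hc e1 he1 e2 he2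
      obtain ⟨e0, he0⟩ := hEdge
      have : c '' G.edgeSet = {c e0} := by
        apply Set.eq_singleton_iff_unique_mem.mpr
        exact ⟨⟨e0, he0, rfl⟩, fun x hx => hss hx ⟨e0, he0, rfl⟩⟩
      rw [this, Set.ncard_singleton]
    · rintro rfl
      refine ⟨fun _ => 0, ?_, ?_⟩
      · intro u v huv
        refine ⟨0, ?_⟩
        have hbot : G.deleteEdges {e | (fun _ => (0:ℕ)) e = 0} = ⊥ := by
          have : {e : Sym2 V | (fun _ => (0:ℕ)) e = 0} = Set.univ := by
            ext e; simp
          rw [this, SimpleGraph.deleteEdges_univ]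
        rw [hbot]
        rw [SimpleGraph.reachable_bot]
        exact huv
      · have : (fun _ => (0:ℕ)) '' G.edgeSet = {0} := hEdge.image_const 0
        rw [this, Set.ncard_singleton]
  rw [mdNum, hSet, csSup_singleton]
end

section
/- There exists a connected graph H on n vertices (n even, n ≥ 4) with minimum degree δ(H) = n/2 and md(H) ≥ 2; namely, take two disjoint copies of K_{n/2} joined by a perfect matching across. -/
lemma top_connected' {α : Type*} [Nonempty α] : (⊤ : SimpleGraph α).Connected := by
  rw [SimpleGraph.connected_iff]
  refine ⟨fun u v => ?_, ‹_›⟩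
  by_cases h : u = v
  · subst h; exact SimpleGraph.Reachable.refl u
  · exact SimpleGraph.Adj.reachable h

lemma not_reachable_of_invariant {V : Type*} {β : Type*} (G : SimpleGraph V) (f : V → β)
    (hf : ∀ a b, G.Adj a b → f a = f b) {u v : V} (hne : f u ≠ f v) : ¬ G.Reachable u v := by
  have key : ∀ {a b : V}, G.Walk a b → f a = f b := by
    intro a b p
    induction p with
    | nil => rfl
    | cons h _ ih => exact (hf _ _ h).trans ih
  exact fun hr => hne (hr.elim fun p => key p)

theorem sharp_example (n : ℕ) (hn : 4 ≤ n) (he : Even n) :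
    ∃ H : SimpleGraph (Fin n), H.Connected ∧
      (∀ v, n / 2 ≤ (H.neighborSet v).ncard) ∧
      (∃ v, (H.neighborSet v).ncard = n / 2) ∧
      2 ≤ mdNum H := by
  classical
  obtain ⟨m, hm⟩ := he
  have hm : n = m + m := hm
  have hmn : n = m * 2 := by omega
  have hhalf : n / 2 = m := by omega
  have hm2 : 2 ≤ m := by omega
  haveI : Nonempty (Fin m) := ⟨⟨0, by omega⟩⟩
  let e : Fin n ≃ Fin m × Fin 2 := (finProdFinEquiv.trans (finCongr hmn.symm)).symm
  let G : SimpleGraph (Fin m × Fin 2) := (⊤ : SimpleGraph (Fin m)) □ (⊤ : SimpleGraph (Fin 2))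
  let H : SimpleGraph (Fin n) := G.comap e.toEmbedding
  have hHadj : ∀ u v : Fin n, H.Adj u v ↔ G.Adj (e u) (e v) := fun u v => Iff.rfl
  have hiso : H ≃g G := SimpleGraph.Iso.comap e G
  refine ⟨H, ?_, ?_, ?_, ?_⟩
  · -- Connected
    refine hiso.connected_iff.mpr ?_
    exact (SimpleGraph.connected_boxProd).mpr ⟨top_connected', top_connected'⟩
  · -- degrees
    intro v
    have hset : H.neighborSet v = e.symm '' (G.neighborSet (e v)) := by
      ext w
      simp only [SimpleGraph.mem_neighborSet, Set.mem_image]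
      constructor
      · intro h
        exact ⟨e w, (hHadj v w).mp h, e.symm_apply_apply w⟩
      · rintro ⟨x, hx, rfl⟩
        rw [hHadj]
        simpa using hx
    rw [hset, Set.ncard_image_of_injective _ e.symm.injective]
    have : (G.neighborSet (e v)).ncard = G.degree (e v) := by
      rw [Set.ncard_eq_toFinset_card', ← SimpleGraph.card_neighborSet_eq_degree,
        Set.toFinset_card]
    rw [this, SimpleGraph.degree_boxProd]
    simp only [SimpleGraph.complete_graph_degree]
    have : Fintype.card (Fin m) = m := Fintype.card_fin m
    have h2 : Fintype.card (Fin 2) = 2 := Fintype.card_fin 2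
    omega
  · -- exists vertex with degree exactly n/2 : all vertices have degree m, reuse computation
    refine ⟨⟨0, by omega⟩, ?_⟩
    set v : Fin n := ⟨0, by omega⟩
    have hset : H.neighborSet v = e.symm '' (G.neighborSet (e v)) := by
      ext w
      simp only [SimpleGraph.mem_neighborSet, Set.mem_image]
      constructor
      · intro h
        exact ⟨e w, (hHadj v w).mp h, e.symm_apply_apply w⟩
      · rintro ⟨x, hx, rfl⟩
        rw [hHadj]
        simpa using hx
    rw [hset, Set.ncard_image_of_injective _ e.symm.injective]
    have : (G.neighborSet (e v)).ncard = G.degree (e v) := by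
      rw [Set.ncard_eq_toFinset_card', ← SimpleGraph.card_neighborSet_eq_degree,
        Set.toFinset_card]
    rw [this, SimpleGraph.degree_boxProd]
    simp only [SimpleGraph.complete_graph_degree]
    have : Fintype.card (Fin m) = m := Fintype.card_fin m
    have h2 : Fintype.card (Fin 2) = 2 := Fintype.card_fin 2
    omega
  · -- mdNum ≥ 2
    set c : Sym2 (Fin n) → ℕ :=
      Sym2.lift ⟨fun u v => if (e u).2 = (e v).2 then 0 else 1, by
        intro a b; simp only [eq_comm]⟩ with hc
    have hcval : ∀ u v : Fin n, c s(u, v) = if (e u).2 = (e v).2 then 0 else 1 := by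
      intro u v; rfl
    have hMD : isMDColoring H c := by
      intro u v huv
      have heuv : e u ≠ e v := fun h => huv (e.injective h)
      by_cases h2 : (e u).2 = (e v).2
      · refine ⟨0, not_reachable_of_invariant _ (fun w => (e w).1) ?_ ?_⟩
        · intro a b hab
          rw [SimpleGraph.deleteEdges_adj] at hab
          obtain ⟨hadj, hnc⟩ := hab
          simp only [Set.mem_setOf_eq, hcval] at hnc
          have hsnd : (e a).2 ≠ (e b).2 := by
            intro h; exact hnc (if_pos h)
          rw [hHadj] at hadj
          rcases hadj with ⟨_, hsnd'⟩ | ⟨_, hfst⟩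
          · exact absurd hsnd' hsnd
          · exact hfst
        · intro hfst
          exact heuv (Prod.ext hfst h2)
      · refine ⟨1, not_reachable_of_invariant _ (fun w => (e w).2) ?_ ?_⟩
        · intro a b hab
          rw [SimpleGraph.deleteEdges_adj] at hab
          obtain ⟨hadj, hnc⟩ := hab
          simp only [Set.mem_setOf_eq, hcval] at hnc
          by_contra hne
          exact hnc (if_neg hne)
        · exact h2
    have himg : c '' H.edgeSet = {0, 1} := by
      apply Set.Subset.antisymm
      · rintro x ⟨s, _, rfl⟩
        induction s using Sym2.inductionOn with
        | hf a b =>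
          rw [hcval]
          split
          · exact Or.inl rfl
          · exact Or.inr rfl
      · rintro x (rfl | rfl)
        · -- an edge inside a clique: between (0,0) and (1,0)
          refine ⟨s(e.symm (⟨0, by omega⟩, 0), e.symm (⟨1, by omega⟩, 0)), ?_, ?_⟩
          · rw [SimpleGraph.mem_edgeSet, hHadj]
            simp only [Equiv.apply_symm_apply]
            left
            exact ⟨by simp [SimpleGraph.top_adj, Fin.ext_iff], rfl⟩
          · rw [hcval]
            simp only [Equiv.apply_symm_apply]
            simp
        · -- a matching edge: between (0,0) and (0,1)
          refine ⟨s(e.symm (⟨0, by omega⟩, 0), e.symm (⟨0, by omega⟩, 1)), ?_, ?_⟩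
          · rw [SimpleGraph.mem_edgeSet, hHadj]
            simp only [Equiv.apply_symm_apply]
            right
            exact ⟨by simp [SimpleGraph.top_adj], rfl⟩
          · rw [hcval]
            simp only [Equiv.apply_symm_apply]
            norm_num
    have hmem : 2 ∈ {k | ∃ c : Sym2 (Fin n) → ℕ, isMDColoring H c ∧ (c '' H.edgeSet).ncard = k} := by
      refine ⟨c, hMD, ?_⟩
      rw [himg]
      exact Set.ncard_pair (by norm_num)
    have hbdd : BddAbove {k | ∃ c : Sym2 (Fin n) → ℕ, isMDColoring H c ∧ (c '' H.edgeSet).ncard = k} := by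
      refine ⟨Nat.card (Sym2 (Fin n)), ?_⟩
      rintro k ⟨c', _, rfl⟩
      calc (c' '' H.edgeSet).ncard ≤ H.edgeSet.ncard :=
            Set.ncard_image_le (Set.toFinite _)
        _ ≤ (Set.univ : Set (Sym2 (Fin n))).ncard :=
            Set.ncard_le_ncard (Set.subset_univ _) (Set.toFinite _)
        _ = Nat.card (Sym2 (Fin n)) := Set.ncard_univ _
    exact le_csSup hbdd hmem
end

section
/- Let G be a connected graph with n vertices and r blocks. Then the number of edges of G satisfies e(G) ≤ C(n - r + 1, 2) + r - 1. -/
/-- A block of G: a maximal connected subgraph without a cut-vertex. -/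
def IsBlock {V : Type*} (G : SimpleGraph V) (B : G.Subgraph) : Prop :=
  B.coe.Connected ∧ (∀ v : V, (B.deleteVerts {v}).coe.Preconnected) ∧
    ∀ B' : G.Subgraph, B'.coe.Connected →
      (∀ v : V, (B'.deleteVerts {v}).coe.Preconnected) → B ≤ B' → B = B'

namespace BlockProofAux
open SimpleGraph


lemma choose_two_add (x y : ℕ) : (x + y).choose 2 = x.choose 2 + y.choose 2 + x * y := by
  induction y with
  | zero => simp
  | succ k ih =>
    rw [show x + (k+1) = (x+k)+1 from rfl, Nat.choose_succ_succ, Nat.choose_one_right,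
      show k + 1 = k + 1 from rfl, Nat.choose_succ_succ (k), Nat.choose_one_right, ih]
    ring

lemma key_arith (m1 m2 d r r1 r2 e1 e2 : ℕ) (hm1 : 1 ≤ m1) (hm2 : 1 ≤ m2)
    (h1 : e1 + 1 ≤ (m1+1).choose 2 + r1) (h2 : e2 + 1 ≤ (m2+1).choose 2 + r2)
    (hr : r + d = r1 + r2) :
    e1 + e2 + 1 ≤ (m1 + m2 + d).choose 2 + r := by
  have ha : (m1 + (m2 + d)).choose 2 = m1.choose 2 + (m2+d).choose 2 + m1 * (m2+d) :=
    choose_two_add _ _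
  have hb : (m2 + d).choose 2 = m2.choose 2 + d.choose 2 + m2 * d := choose_two_add _ _
  have hc1 : (m1+1).choose 2 = m1.choose 2 + Nat.choose 1 2 + m1 * 1 := choose_two_add _ _
  have hc2 : (m2+1).choose 2 = m2.choose 2 + Nat.choose 1 2 + m2 * 1 := choose_two_add _ _
  have h1' : Nat.choose 1 2 = 0 := rfl
  simp only [h1', Nat.add_zero, Nat.mul_one] at hc1 hc2
  have hkey : m1 + m2 + d ≤ d.choose 2 + m2 * d + m1 * m2 + m1 * d + 1 := by
    obtain ⟨a, rfl⟩ : ∃ a, m1 = a + 1 := ⟨m1 - 1, by omega⟩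
    obtain ⟨b, rfl⟩ : ∃ b, m2 = b + 1 := ⟨m2 - 1, by omega⟩
    have e1 : (a+1) * (b+1) = a*b + a + b + 1 := by ring
    have e2 : (a+1) * d = a*d + d := by ring
    omega
  have hprod : m1 * (m2 + d) = m1 * m2 + m1 * d := by ring
  rw [show m1 + m2 + d = m1 + (m2 + d) from by ring, ha, hb, hprod]
  omega


variable {V : Type*} {G : SimpleGraph V}

lemma preconnected_of_subsingleton {W : Type*} (H : SimpleGraph W) (h : Subsingleton W) :
    H.Preconnected := fun a b => by rw [h.elim a b]

lemma subgraph_finite [Finite V] : Finite G.Subgraph := by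
  classical
  have hinj : Function.Injective (fun B : G.Subgraph => (B.verts, B.Adj)) := by
    intro B C h
    simp only [Prod.mk.injEq] at h
    exact SimpleGraph.Subgraph.ext h.1 h.2
  exact Finite.of_injective _ hinj

/-- Restriction of a subgraph with vertices inside `W` to a subgraph of the induced graph. -/
def restr (W : Set V) (B : G.Subgraph) (_hB : B.verts ⊆ W) : (G.induce W).Subgraph where
  verts := {x : W | (x : V) ∈ B.verts}
  Adj a b := B.Adj (a : V) (b : V)
  adj_sub h := by simpa using h.adj_sub
  edge_vert h := h.fst_mem
  symm := ⟨fun _ _ h => h.symm⟩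

/-- Promotion of a subgraph of an induced graph to a subgraph of the ambient graph. -/
def unrestr (W : Set V) (C : (G.induce W).Subgraph) : G.Subgraph where
  verts := Subtype.val '' C.verts
  Adj x y := ∃ (hx : x ∈ W) (hy : y ∈ W), C.Adj ⟨x, hx⟩ ⟨y, hy⟩
  adj_sub := by rintro x y ⟨hx, hy, h⟩; simpa using h.adj_sub
  edge_vert := by rintro x y ⟨hx, hy, h⟩; exact ⟨⟨x, hx⟩, h.fst_mem, rfl⟩
  symm := ⟨by rintro x y ⟨hx, hy, h⟩; exact ⟨hy, hx, h.symm⟩⟩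

lemma unrestr_verts_subset {W : Set V} (C : (G.induce W).Subgraph) :
    (unrestr W C).verts ⊆ W := by
  rintro x ⟨⟨y, hy⟩, _, rfl⟩; exact hy

lemma restr_unrestr {W : Set V} (C : (G.induce W).Subgraph)
    (h : (unrestr W C).verts ⊆ W) : restr W (unrestr W C) h = C := by
  apply SimpleGraph.Subgraph.ext
  · ext a
    constructor
    · rintro ⟨b, hb, hba⟩
      cases Subtype.ext hba
      exact hb
    · intro ha
      exact ⟨a, ha, rfl⟩
  · ext a b
    constructor
    · rintro ⟨ha, hb, h⟩
      exact h
    · intro h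
      exact ⟨a.2, b.2, h⟩

lemma unrestr_restr {W : Set V} (B : G.Subgraph) (hB : B.verts ⊆ W) :
    unrestr W (restr W B hB) = B := by
  apply SimpleGraph.Subgraph.ext
  · ext x
    constructor
    · rintro ⟨a, ha, rfl⟩; exact ha
    · intro hx; exact ⟨⟨x, hB hx⟩, hx, rfl⟩
  · ext x y
    constructor
    · rintro ⟨hx, hy, h⟩; exact h
    · intro h; exact ⟨hB h.fst_mem, hB h.snd_mem, h⟩

lemma unrestr_mono {W : Set V} {C C' : (G.induce W).Subgraph} (h : C ≤ C') :
    unrestr W C ≤ unrestr W C' := by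
  constructor
  · exact Set.image_mono h.1
  · rintro x y ⟨hx, hy, hadj⟩; exact ⟨hx, hy, h.2 hadj⟩

/-- The coercion of a restricted subgraph is isomorphic to the coercion of the original. -/
def restrIso (W : Set V) (B : G.Subgraph) (hB : B.verts ⊆ W) :
    (restr W B hB).coe ≃g B.coe where
  toFun x := ⟨((x : W) : V), x.2⟩
  invFun x := ⟨⟨(x : V), hB x.2⟩, x.2⟩
  left_inv x := Subtype.ext (Subtype.ext rfl)
  right_inv x := rfl
  map_rel_iff' := Iff.rfl

@[simp] lemma restr_verts {W : Set V} (B : G.Subgraph) (hB : B.verts ⊆ W) :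
    (restr W B hB).verts = {x : W | (x : V) ∈ B.verts} := rfl

@[simp] lemma restr_adj {W : Set V} (B : G.Subgraph) (hB : B.verts ⊆ W) (a b : W) :
    (restr W B hB).Adj a b ↔ B.Adj (a : V) (b : V) := Iff.rfl

@[simp] lemma unrestr_verts {W : Set V} (C : (G.induce W).Subgraph) :
    (unrestr W C).verts = Subtype.val '' C.verts := rfl

@[simp] lemma unrestr_adj {W : Set V} (C : (G.induce W).Subgraph) (x y : V) :
    (unrestr W C).Adj x y ↔ ∃ (hx : x ∈ W) (hy : y ∈ W), C.Adj ⟨x, hx⟩ ⟨y, hy⟩ := Iff.rfl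

lemma restr_deleteVerts {W : Set V} (B : G.Subgraph) (hB : B.verts ⊆ W) (w : W) :
    (restr W B hB).deleteVerts {w}
      = restr W (B.deleteVerts {(w : V)}) (fun _ hx => hB hx.1) := by
  apply SimpleGraph.Subgraph.ext
  · ext a
    simp only [SimpleGraph.Subgraph.deleteVerts_verts, restr_verts, Set.mem_diff,
      Set.mem_setOf_eq, Set.mem_singleton_iff, Subtype.ext_iff]
    exact Iff.rfl
  · ext a b
    simp only [SimpleGraph.Subgraph.deleteVerts_adj, restr_verts, restr_adj,
      Set.mem_setOf_eq, Set.mem_singleton_iff, Subtype.ext_iff]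
    exact Iff.symm ((restr_adj _ _ a b).trans (by
      rw [SimpleGraph.Subgraph.deleteVerts_adj, Set.mem_singleton_iff, Set.mem_singleton_iff]))

lemma unrestr_deleteVerts_mem {W : Set V} (C : (G.induce W).Subgraph) {x : V} (hx : x ∈ W) :
    (unrestr W C).deleteVerts {x} = unrestr W (C.deleteVerts {(⟨x, hx⟩ : W)}) := by
  apply SimpleGraph.Subgraph.ext
  · ext z
    simp only [SimpleGraph.Subgraph.deleteVerts_verts, unrestr_verts, Set.mem_diff,
      Set.mem_image, Set.mem_singleton_iff, Subtype.ext_iff]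
    constructor
    · rintro ⟨⟨a, ha, rfl⟩, hz⟩
      exact ⟨a, ⟨ha, hz⟩, rfl⟩
    · intro h
      aesop
  · ext z w
    simp only [SimpleGraph.Subgraph.deleteVerts_adj, unrestr_verts, unrestr_adj,
      Set.mem_diff, Set.mem_image, Set.mem_singleton_iff, Subtype.ext_iff]
    constructor
    · intro h
      aesop
    · intro h
      aesop

lemma unrestr_deleteVerts_not_mem {W : Set V} (C : (G.induce W).Subgraph) {x : V} (hx : x ∉ W) :
    (unrestr W C).deleteVerts {x} = unrestr W C := by
  have h1 : (unrestr W C).verts ∩ {x} = ∅ := by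
    ext z
    simp only [Set.mem_inter_iff, Set.mem_singleton_iff, Set.mem_empty_iff_false, iff_false,
      not_and]
    rintro hz rfl
    exact hx (unrestr_verts_subset C hz)
  calc (unrestr W C).deleteVerts {x}
      = (unrestr W C).deleteVerts ((unrestr W C).verts ∩ {x}) :=
        (SimpleGraph.Subgraph.deleteVerts_inter_verts_left_eq).symm
    _ = (unrestr W C).deleteVerts ∅ := by rw [h1]
    _ = unrestr W C := SimpleGraph.Subgraph.deleteVerts_empty

lemma subsingleton_coe_preconnected {B : G.Subgraph} (h : B.verts.Subsingleton) :
    B.coe.Preconnected :=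
  preconnected_of_subsingleton _ ⟨fun a b => Subtype.ext (h a.2 b.2)⟩

lemma exists_block [Finite V] (hG : G.Connected) : ∃ B : G.Subgraph, IsBlock G B := by
  obtain ⟨v⟩ := hG.nonempty
  haveI : Finite G.Subgraph := subgraph_finite
  set P : Set G.Subgraph :=
    {B | B.coe.Connected ∧ ∀ w, (B.deleteVerts {w}).coe.Preconnected} with hP
  have hne : P.Nonempty := by
    refine ⟨G.singletonSubgraph v, ?_, fun w => ?_⟩
    · exact SimpleGraph.Subgraph.singletonSubgraph_connected.coe
    · apply subsingleton_coe_preconnected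
      intro a ha b hb
      have h1 : a ∈ ({v} : Set V) := ha.1
      have h2 : b ∈ ({v} : Set V) := hb.1
      rw [h1, h2]
  obtain ⟨B, hBP, hmax⟩ := P.toFinite.exists_maximal hne
  exact ⟨B, hBP.1, hBP.2, fun B' h1 h2 hle => le_antisymm hle (hmax ⟨h1, h2⟩ hle)⟩

lemma isBlock_restr {W : Set V} (B : G.Subgraph) (hB : B.verts ⊆ W) (h : IsBlock G B) :
    IsBlock (G.induce W) (restr W B hB) := by
  obtain ⟨hconn, h2, hmax⟩ := h
  refine ⟨(restrIso W B hB).connected_iff.mpr hconn, ?_, ?_⟩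
  · intro w
    rw [restr_deleteVerts]
    exact (restrIso W _ _).preconnected_iff.mpr (h2 w)
  · intro C hCconn hC2 hle
    have hBle : B ≤ unrestr W C := by
      have := unrestr_mono hle
      rwa [unrestr_restr] at this
    have econn : C.coe ≃g (unrestr W C).coe := by
      have e := restrIso W (unrestr W C) (unrestr_verts_subset C)
      rw [restr_unrestr] at e
      exact e
    have hconn' : (unrestr W C).coe.Connected := econn.connected_iff.mp hCconn
    have h2' : ∀ x : V, ((unrestr W C).deleteVerts {x}).coe.Preconnected := by
      intro x
      by_cases hx : x ∈ W
      · rw [unrestr_deleteVerts_mem C hx]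
        have e := restrIso W (unrestr W (C.deleteVerts {(⟨x, hx⟩ : W)}))
          (unrestr_verts_subset _)
        rw [restr_unrestr] at e
        exact e.preconnected_iff.mp (hC2 ⟨x, hx⟩)
      · rw [unrestr_deleteVerts_not_mem C hx]
        exact hconn'.preconnected
    have hEq : B = unrestr W C := hmax (unrestr W C) hconn' h2' hBle
    subst hEq
    exact restr_unrestr C hB

lemma reachable_induce_of_walk {T : Set V} {v : V} (hvT : v ∈ T)
    (hclose : ∀ x y : V, x ∈ T → x ≠ v → G.Adj x y → y ≠ v → y ∈ T) :
    ∀ {x y' : V} (p : G.Walk x y') (_ : y' = v) (hx : x ∈ T),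
      (G.induce T).Reachable ⟨x, hx⟩ ⟨v, hvT⟩ := by
  intro x y' p
  induction p with
  | nil =>
    intro hyv hx
    subst hyv
    exact SimpleGraph.Reachable.refl _
  | @cons x y _ h q ih =>
    intro hyv hx
    by_cases hxv : x = v
    · subst hxv; exact SimpleGraph.Reachable.refl _
    · have hyT : y ∈ T := by
        by_cases hyv : y = v
        · subst hyv; exact hvT
        · exact hclose x y hx hxv h hyv
      have hadj : (G.induce T).Adj ⟨x, hx⟩ ⟨y, hyT⟩ := by simpa using h
      exact hadj.reachable.trans (ih hyv hyT)

lemma reachable_delete_top_of_walk {v : V} :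
    ∀ {x y : V} (p : G.Walk x y), v ∉ p.support →
      ∀ (hx : x ∈ ((⊤ : G.Subgraph).deleteVerts {v}).verts)
        (hy : y ∈ ((⊤ : G.Subgraph).deleteVerts {v}).verts),
      ((⊤ : G.Subgraph).deleteVerts {v}).coe.Reachable ⟨x, hx⟩ ⟨y, hy⟩ := by
  intro x y p
  induction p with
  | nil => intro _ hx hy; exact SimpleGraph.Reachable.refl _
  | @cons x z _ h q ih =>
    intro hs hx hy
    rw [SimpleGraph.Walk.support_cons, List.mem_cons] at hs
    push_neg at hs
    have hz : z ∈ ((⊤ : G.Subgraph).deleteVerts {v}).verts := by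
      refine ⟨Set.mem_univ z, fun hzv => ?_⟩
      exact hs.2 (by cases hzv; exact q.start_mem_support)
    have hadj : ((⊤ : G.Subgraph).deleteVerts {v}).coe.Adj ⟨x, hx⟩ ⟨z, hz⟩ :=
      ⟨hx, hz, h⟩
    exact hadj.reachable.trans (ih hs.2 hz hy)

lemma walk_avoiding_of_delete_reachable {B : G.Subgraph} {v : V} {x y : V}
    (hx : x ∈ (B.deleteVerts {v}).verts) (hy : y ∈ (B.deleteVerts {v}).verts)
    (h : (B.deleteVerts {v}).coe.Reachable ⟨x, hx⟩ ⟨y, hy⟩) :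
    ∃ p : G.Walk x y, v ∉ p.support := by
  obtain ⟨q⟩ := h
  refine ⟨q.map (SimpleGraph.Subgraph.hom _), fun hmem => ?_⟩
  erw [SimpleGraph.Walk.support_map, List.mem_map] at hmem
  obtain ⟨z, _, hz⟩ := hmem
  exact z.2.2 hz

lemma induce_edgeSet_ncard (W : Set V) :
    (G.induce W).edgeSet.ncard = {e | e ∈ G.edgeSet ∧ ∀ x ∈ e, x ∈ W}.ncard := by
  rw [← Set.ncard_image_of_injective (G.induce W).edgeSet
    (Sym2.map.injective Subtype.val_injective)]
  congr 1
  ext e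
  constructor
  · rintro ⟨e', he', rfl⟩
    revert he'
    refine Sym2.ind (fun a b => ?_) e'
    intro he'
    · rw [SimpleGraph.mem_edgeSet] at he'
      have hadj : G.Adj (a : V) (b : V) := by simpa using he'
      refine ⟨(SimpleGraph.mem_edgeSet G).mpr hadj, ?_⟩
      intro x hx
      rw [Sym2.map_pair_eq, Sym2.mem_iff] at hx
      rcases hx with rfl | rfl
      · exact a.2
      · exact b.2
  · intro he
    revert he
    refine Sym2.ind (fun a b => ?_) e
    intro he
    · obtain ⟨hadj, hmem⟩ := he
      rw [SimpleGraph.mem_edgeSet] at hadj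
      have ha : a ∈ W := hmem a (Sym2.mem_mk_left a b)
      have hb : b ∈ W := hmem b (Sym2.mem_mk_right a b)
      refine ⟨s(⟨a, ha⟩, ⟨b, hb⟩), ?_, ?_⟩
      · rw [SimpleGraph.mem_edgeSet]
        simpa using hadj
      · rw [Sym2.map_pair_eq]

/-- The number of blocks of a graph. -/
noncomputable def bcount {V : Type*} (G : SimpleGraph V) : ℕ :=
  {B : G.Subgraph | IsBlock G B}.ncard

lemma ncard_blocks_side_le [Finite V] (W : Set V) :
    {B : G.Subgraph | IsBlock G B ∧ B.verts ⊆ W}.ncard ≤ bcount (G.induce W) := by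
  classical
  haveI : Finite (G.induce W).Subgraph := subgraph_finite
  set f : G.Subgraph → (G.induce W).Subgraph :=
    fun B => if h : B.verts ⊆ W then restr W B h else ⊥ with hf
  have hinj : Set.InjOn f {B | IsBlock G B ∧ B.verts ⊆ W} := by
    intro B hB C hC heq
    rw [hf] at heq
    simp only [dif_pos hB.2, dif_pos hC.2] at heq
    have h2 := congrArg (unrestr W) heq
    rwa [unrestr_restr, unrestr_restr] at h2
  have himg : f '' {B | IsBlock G B ∧ B.verts ⊆ W} ⊆ {C | IsBlock (G.induce W) C} := by
    rintro _ ⟨B, ⟨hB, hBW⟩, rfl⟩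
    simp only [hf, dif_pos hBW, Set.mem_setOf_eq]
    exact isBlock_restr B hBW hB
  calc {B : G.Subgraph | IsBlock G B ∧ B.verts ⊆ W}.ncard
      = (f '' {B : G.Subgraph | IsBlock G B ∧ B.verts ⊆ W}).ncard :=
        (Set.ncard_image_of_injOn hinj).symm
    _ ≤ bcount (G.induce W) := Set.ncard_le_ncard himg (Set.toFinite _)

lemma aux : ∀ (n : ℕ) (V : Type u) (G : SimpleGraph V), Finite V → G.Connected →
    Nat.card V = n →
    1 ≤ bcount G ∧ (bcount G = 1 ∨ bcount G + 1 ≤ n) ∧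
      ∃ m, m + bcount G = n + 1 ∧ G.edgeSet.ncard + 1 ≤ m.choose 2 + bcount G := by
  intro n
  induction n using Nat.strong_induction_on with
  | _ n IH =>
  intro V G hfin hG hcard
  haveI := hfin
  haveI : Finite G.Subgraph := subgraph_finite
  have hb1 : 1 ≤ bcount G := by
    obtain ⟨B, hB⟩ := exists_block hG
    exact (Set.ncard_pos (Set.toFinite _)).mpr ⟨B, hB⟩
  by_cases hcut : ∀ w : V, ((⊤ : G.Subgraph).deleteVerts {w}).coe.Preconnected
  · -- G is 2-connected (or small): the only block is ⊤
    have htop : IsBlock G ⊤ := by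
      refine ⟨SimpleGraph.Subgraph.topIso.connected_iff.mpr hG, hcut, ?_⟩
      intro B' _ _ hle
      exact (top_le_iff.mp hle).symm
    have hset : {B : G.Subgraph | IsBlock G B} = {⊤} := by
      ext B
      simp only [Set.mem_setOf_eq, Set.mem_singleton_iff]
      constructor
      · intro hB
        exact hB.2.2 ⊤ (SimpleGraph.Subgraph.topIso.connected_iff.mpr hG) hcut le_top
      · rintro rfl; exact htop
    have hbc : bcount G = 1 := by rw [bcount, hset, Set.ncard_singleton]
    refine ⟨by omega, Or.inl hbc, n, by omega, ?_⟩
    have hE : G.edgeSet.ncard ≤ n.choose 2 := by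
      classical
      letI : Fintype V := Fintype.ofFinite V
      letI : DecidableRel G.Adj := Classical.decRel _
      have h1 := G.card_edgeFinset_le_card_choose_two
      rw [← Set.ncard_coe_finset, SimpleGraph.coe_edgeFinset] at h1
      rwa [← hcard, Nat.card_eq_fintype_card]
    omega
  · -- there is a cut vertex v
    push_neg at hcut
    obtain ⟨v, hv⟩ := hcut
    unfold SimpleGraph.Preconnected at hv
    push_neg at hv
    obtain ⟨a', b', hab⟩ := hv
    have hav : (a' : V) ≠ v := fun h => a'.2.2 h
    have hbv : (b' : V) ≠ v := fun h => b'.2.2 h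
    set S : Set V := {x : V | x ≠ v ∧ ∃ p : G.Walk (a' : V) x, v ∉ p.support} with hS
    have haS : (a' : V) ∈ S := by
      refine ⟨hav, SimpleGraph.Walk.nil, ?_⟩
      rw [SimpleGraph.Walk.support_nil, List.mem_singleton]
      exact fun h => hav h.symm
    have hSclosed : ∀ {x y : V}, x ∈ S → ∀ p : G.Walk x y, v ∉ p.support → y ∈ S := by
      rintro x y ⟨hxv, q, hq⟩ p hp
      refine ⟨fun h => hp (h ▸ p.end_mem_support), q.append p, ?_⟩
      rw [SimpleGraph.Walk.support_append, List.mem_append]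
      rintro (h | h)
      · exact hq h
      · exact hp (List.mem_of_mem_tail h)
    have hbS : (b' : V) ∉ S := by
      rintro ⟨_, p, hp⟩
      exact hab (reachable_delete_top_of_walk p hp a'.2 b'.2)
    have hvS : v ∉ S := fun h => h.1 rfl
    set V1 : Set V := S ∪ {v} with hV1
    set V2 : Set V := Sᶜ with hV2
    have hvV1 : v ∈ V1 := Or.inr rfl
    have hvV2 : v ∈ V2 := hvS
    have haV1 : (a' : V) ∈ V1 := Or.inl haS
    have hbV2 : (b' : V) ∈ V2 := hbS
    have haV2 : (a' : V) ∉ V2 := fun h => h haS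
    have hbV1 : (b' : V) ∉ V1 := by
      rintro (h | h)
      · exact hbS h
      · exact hbv h
    -- closure properties
    have hc1 : ∀ x y : V, x ∈ V1 → x ≠ v → G.Adj x y → y ≠ v → y ∈ V1 := by
      intro x y hx hxv hadj hyv
      have hxS : x ∈ S := hx.resolve_right hxv
      exact Or.inl (hSclosed hxS (hadj.toWalk) (by
        rw [SimpleGraph.Walk.support_cons, SimpleGraph.Walk.support_nil]
        simp only [List.mem_cons, List.mem_singleton, List.not_mem_nil, or_false]
        rintro (h | h)
        · exact hxv h.symm
        · exact hyv h.symm))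
    have hc2 : ∀ x y : V, x ∈ V2 → x ≠ v → G.Adj x y → y ≠ v → y ∈ V2 := by
      intro x y hx hxv hadj hyv
      intro hyS
      exact hx (hSclosed hyS (hadj.symm.toWalk) (by
        rw [SimpleGraph.Walk.support_cons, SimpleGraph.Walk.support_nil]
        simp only [List.mem_cons, List.mem_singleton, List.not_mem_nil, or_false]
        rintro (h | h)
        · exact hyv h.symm
        · exact hxv h.symm))
    -- connectivity of the two sides
    have hG1 : (G.induce V1).Connected := by
      rw [SimpleGraph.connected_iff]
      refine ⟨?_, ⟨⟨v, hvV1⟩⟩⟩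
      have key : ∀ z : V1, (G.induce V1).Reachable z ⟨v, hvV1⟩ := by
        rintro ⟨z, hz⟩
        obtain ⟨p⟩ := hG.preconnected z v
        exact reachable_induce_of_walk hvV1 hc1 p rfl hz
      intro z z'
      exact (key z).trans (key z').symm
    have hG2 : (G.induce V2).Connected := by
      rw [SimpleGraph.connected_iff]
      refine ⟨?_, ⟨⟨v, hvV2⟩⟩⟩
      have key : ∀ z : V2, (G.induce V2).Reachable z ⟨v, hvV2⟩ := by
        rintro ⟨z, hz⟩
        obtain ⟨p⟩ := hG.preconnected z v
        exact reachable_induce_of_walk hvV2 hc2 p rfl hz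
      intro z z'
      exact (key z).trans (key z').symm
    -- cardinalities
    have hunion : V1 ∪ V2 = Set.univ := by
      ext x
      simp only [Set.mem_union, Set.mem_univ, iff_true]
      by_cases hx : x ∈ S
      · exact Or.inl (Or.inl hx)
      · exact Or.inr hx
    have hinter : V1 ∩ V2 = {v} := by
      ext x
      simp only [Set.mem_inter_iff, Set.mem_singleton_iff]
      constructor
      · rintro ⟨h1 | h1, h2⟩
        · exact absurd h1 h2
        · exact h1
      · rintro rfl; exact ⟨hvV1, hvV2⟩
    have hcards : V1.ncard + V2.ncard = n + 1 := by
      have h := Set.ncard_union_add_ncard_inter V1 V2 (Set.toFinite _) (Set.toFinite _)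
      rw [hunion, hinter, Set.ncard_univ, hcard, Set.ncard_singleton] at h
      omega
    have hn1lt : Nat.card V1 < n := by
      rw [Nat.card_coe_set_eq]
      have : V1 ⊂ Set.univ := by
        refine ⟨Set.subset_univ _, fun h => hbV1 (h (Set.mem_univ _))⟩
      have := Set.ncard_lt_ncard this (Set.toFinite _)
      rwa [Set.ncard_univ, hcard] at this
    have hn2lt : Nat.card V2 < n := by
      rw [Nat.card_coe_set_eq]
      have : V2 ⊂ Set.univ := by
        refine ⟨Set.subset_univ _, fun h => haV2 (h (Set.mem_univ _))⟩
      have := Set.ncard_lt_ncard this (Set.toFinite _)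
      rwa [Set.ncard_univ, hcard] at this
    have hn1two : 2 ≤ Nat.card V1 := by
      rw [Nat.card_coe_set_eq]
      have : ({(a' : V), v} : Set V) ⊆ V1 := by
        rintro x (rfl | rfl)
        · exact haV1
        · exact hvV1
      calc 2 = ({(a' : V), v} : Set V).ncard := (Set.ncard_pair hav).symm
        _ ≤ V1.ncard := Set.ncard_le_ncard this (Set.toFinite _)
    have hn2two : 2 ≤ Nat.card V2 := by
      rw [Nat.card_coe_set_eq]
      have : ({(b' : V), v} : Set V) ⊆ V2 := by
        rintro x (rfl | rfl)
        · exact hbV2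
        · exact hvV2
      calc 2 = ({(b' : V), v} : Set V).ncard := (Set.ncard_pair hbv).symm
        _ ≤ V2.ncard := Set.ncard_le_ncard this (Set.toFinite _)
    -- apply the induction hypothesis to both sides
    obtain ⟨hr1a, hr1b, m1, hm1, he1⟩ :=
      IH (Nat.card V1) (by omega) V1 (G.induce V1) inferInstance hG1 rfl
    obtain ⟨hr2a, hr2b, m2, hm2, he2⟩ :=
      IH (Nat.card V2) (by omega) V2 (G.induce V2) inferInstance hG2 rfl
    -- edge count decomposition
    have havoid : ∀ {x y : V} (h : G.Adj x y), x ≠ v → y ≠ v → v ∉ h.toWalk.support := by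
      intro x y h hxv hyv
      rw [SimpleGraph.Walk.support_cons, SimpleGraph.Walk.support_nil]
      simp only [List.mem_cons, List.mem_singleton, List.not_mem_nil, or_false]
      rintro (h' | h')
      · exact hxv h'.symm
      · exact hyv h'.symm
    have hedges : G.edgeSet.ncard
        = (G.induce V1).edgeSet.ncard + (G.induce V2).edgeSet.ncard := by
      rw [induce_edgeSet_ncard, induce_edgeSet_ncard]
      have hsplit : G.edgeSet
          = {e | e ∈ G.edgeSet ∧ ∀ x ∈ e, x ∈ V1}
            ∪ {e | e ∈ G.edgeSet ∧ ∀ x ∈ e, x ∈ V2} := by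
        apply Set.Subset.antisymm
        · intro e
          refine Sym2.ind (fun x y he => ?_) e
          have hadj : G.Adj x y := (SimpleGraph.mem_edgeSet G).mp he
          by_cases hxS : x ∈ S
          · have hyV1 : y ∈ V1 := by
              by_cases hyv : y = v
              · exact Or.inr hyv
              · exact Or.inl (hSclosed hxS hadj.toWalk (havoid hadj hxS.1 hyv))
            refine Or.inl ⟨he, fun z hz => ?_⟩
            rcases Sym2.mem_iff.mp hz with rfl | rfl
            · exact Or.inl hxS
            · exact hyV1
          · by_cases hyS : y ∈ S
            · have hxV1 : x ∈ V1 := by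
                by_cases hxv : x = v
                · exact Or.inr hxv
                · exact absurd (hSclosed hyS hadj.symm.toWalk
                    (havoid hadj.symm hyS.1 hxv)) hxS
              refine Or.inl ⟨he, fun z hz => ?_⟩
              rcases Sym2.mem_iff.mp hz with rfl | rfl
              · exact hxV1
              · exact Or.inl hyS
            · refine Or.inr ⟨he, fun z hz => ?_⟩
              rcases Sym2.mem_iff.mp hz with rfl | rfl
              · exact hxS
              · exact hyS
        · rintro e (⟨he, _⟩ | ⟨he, _⟩) <;> exact he
      have hdisj : Disjoint {e | e ∈ G.edgeSet ∧ ∀ x ∈ e, x ∈ V1}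
          {e | e ∈ G.edgeSet ∧ ∀ x ∈ e, x ∈ V2} := by
        rw [Set.disjoint_left]
        intro e
        refine Sym2.ind (fun x y h1 h2 => ?_) e
        obtain ⟨he, hm1⟩ := h1
        obtain ⟨_, hm2⟩ := h2
        have hx : x = v := by
          have hh1 := hm1 x (Sym2.mem_mk_left x y)
          have hh2 := hm2 x (Sym2.mem_mk_left x y)
          rcases hh1 with hh1 | hh1
          · exact absurd hh1 hh2
          · exact hh1
        have hy : y = v := by
          have hh1 := hm1 y (Sym2.mem_mk_right x y)
          have hh2 := hm2 y (Sym2.mem_mk_right x y)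
          rcases hh1 with hh1 | hh1
          · exact absurd hh1 hh2
          · exact hh1
        rw [hx, hy] at he
        exact G.irrefl ((SimpleGraph.mem_edgeSet G).mp he)
      have hcalc := Set.ncard_union_eq hdisj (Set.toFinite _) (Set.toFinite _)
      rw [← hsplit] at hcalc
      exact hcalc
    -- block count bound
    have hblocks : bcount G ≤ bcount (G.induce V1) + bcount (G.induce V2) := by
      have hside : ∀ B : G.Subgraph, B.coe.Connected →
          (∀ w : V, (B.deleteVerts {w}).coe.Preconnected) →
          B.verts ⊆ V1 ∨ B.verts ⊆ V2 := by
        intro B hconn hB2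
        by_contra hcon
        push_neg at hcon
        obtain ⟨hns1, hns2⟩ := hcon
        obtain ⟨x, hxB, hxV1⟩ := Set.not_subset.mp hns1
        obtain ⟨y, hyB, hyV2⟩ := Set.not_subset.mp hns2
        have hyS : y ∈ S := not_not.mp hyV2
        have hxS : x ∉ S := fun h => hxV1 (Or.inl h)
        have hxv : x ≠ v := fun h => hxV1 (Or.inr h)
        have hyv : y ≠ v := hyS.1
        have hre := (hB2 v) ⟨y, hyB, hyv⟩ ⟨x, hxB, hxv⟩
        obtain ⟨p, hp⟩ := walk_avoiding_of_delete_reachable _ _ hre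
        exact hxS (hSclosed hyS p hp)
      have hsub : {B : G.Subgraph | IsBlock G B}
          ⊆ {B : G.Subgraph | IsBlock G B ∧ B.verts ⊆ V1}
            ∪ {B : G.Subgraph | IsBlock G B ∧ B.verts ⊆ V2} := by
        intro B hB
        rcases hside B hB.1 hB.2.1 with h | h
        · exact Or.inl ⟨hB, h⟩
        · exact Or.inr ⟨hB, h⟩
      calc bcount G ≤ _ := Set.ncard_le_ncard hsub (Set.toFinite _)
        _ ≤ {B : G.Subgraph | IsBlock G B ∧ B.verts ⊆ V1}.ncard
            + {B : G.Subgraph | IsBlock G B ∧ B.verts ⊆ V2}.ncard :=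
          Set.ncard_union_le _ _
        _ ≤ bcount (G.induce V1) + bcount (G.induce V2) :=
          Nat.add_le_add (ncard_blocks_side_le V1) (ncard_blocks_side_le V2)
    -- assemble
    set r := bcount G with hr
    set r1 := bcount (G.induce V1) with hr1
    set r2 := bcount (G.induce V2) with hr2
    set n1 := Nat.card V1
    set n2 := Nat.card V2
    have hn12 : n1 + n2 = n + 1 := by
      rw [show n1 = V1.ncard from Nat.card_coe_set_eq _,
        show n2 = V2.ncard from Nat.card_coe_set_eq _]
      exact hcards
    have hr1n : r1 + 1 ≤ n1 := by omega
    have hr2n : r2 + 1 ≤ n2 := by omega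
    have hm1ge : 2 ≤ m1 := by omega
    have hm2ge : 2 ≤ m2 := by omega
    have hrn : r + 1 ≤ n := by omega
    refine ⟨hb1, Or.inr hrn, n + 1 - r, by omega, ?_⟩
    obtain ⟨m1', rfl⟩ : ∃ k, m1 = k + 1 := ⟨m1 - 1, by omega⟩
    obtain ⟨m2', rfl⟩ : ∃ k, m2 = k + 1 := ⟨m2 - 1, by omega⟩
    have hd : r + ((r1 + r2) - r) = r1 + r2 := by omega
    have hkey := key_arith m1' m2' ((r1 + r2) - r) r r1 r2
      (G.induce V1).edgeSet.ncard (G.induce V2).edgeSet.ncard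
      (by omega) (by omega) he1 he2 hd
    have hmeq : m1' + m2' + ((r1 + r2) - r) = n + 1 - r := by omega
    rw [hmeq] at hkey
    omega

end BlockProofAux

theorem blocks_edge_bound {V : Type*} [Fintype V] (G : SimpleGraph V)
    (hG : G.Connected) (n r : ℕ) (hn : Fintype.card V = n)
    (hr : {B : G.Subgraph | IsBlock G B}.ncard = r) :
    G.edgeSet.ncard ≤ (n - r + 1).choose 2 + r - 1 := by
  obtain ⟨h1, h2, m, hm, he⟩ := BlockProofAux.aux n V G inferInstance hG
    (by rw [Nat.card_eq_fintype_card, hn])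
  have hbc : BlockProofAux.bcount G = r := by unfold BlockProofAux.bcount; exact hr
  rw [hbc] at h1 h2 hm he
  have hnpos : 1 ≤ n := by
    haveI : Nonempty V := hG.nonempty
    rw [← hn]
    exact Fintype.card_pos
  rcases h2 with h2 | h2
  · have hmn : m = n := by omega
    rw [hmn] at he
    rw [h2]
    have hrw : n - 1 + 1 = n := by omega
    rw [hrw]
    omega
  · have hmn : m = n - r + 1 := by omega
    rw [hmn] at he
    omega
end

section
/- If G is a graph on n ≥ 4 vertices with e(G) ≥ C(n-1,2) + 2 edges, then md(G) = 1; moreover, this edge bound is sharp, since the graph obtained from K_{n-1} by attaching a pendent edge has C(n-1,2) + 1 edges and md equal to 2. -/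
open SimpleGraph Set

section helpers
variable {V : Type*} {G : SimpleGraph V}

/-- A set closed under adjacency absorbs walks. -/
lemma walk_closed {S : Set V} (h : ∀ x ∈ S, ∀ y, G.Adj x y → y ∈ S) :
    ∀ {u v : V}, G.Walk u v → u ∈ S → v ∈ S := by
  intro u v p
  induction p with
  | nil => exact id
  | cons ha _ ih => exact fun hu => ih (h _ hu _ ha)

lemma not_reachable_of_closed {S : Set V} (h : ∀ x ∈ S, ∀ y, G.Adj x y → y ∈ S)
    {u v : V} (hu : u ∈ S) (hv : v ∉ S) : ¬ G.Reachable u v := by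
  intro ⟨p⟩
  exact hv (walk_closed h p hu)

lemma cut_edge {c : Sym2 V → ℕ} {i : ℕ} {u v : V}
    (hI : ¬ (G.deleteEdges {e | c e = i}).Reachable u v) (h : G.Adj u v) :
    c s(u, v) = i := by
  by_contra hne
  have : (G.deleteEdges {e | c e = i}).Adj u v := by
    rw [deleteEdges_adj]; exact ⟨h, hne⟩
  exact hI this.reachable

lemma cut_path2 {c : Sym2 V → ℕ} {i : ℕ} {u v w : V}
    (hI : ¬ (G.deleteEdges {e | c e = i}).Reachable u v)
    (h1 : G.Adj u w) (h2 : G.Adj w v) : c s(u, w) = i ∨ c s(w, v) = i := by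
  by_contra hne
  push_neg at hne
  have a1 : (G.deleteEdges {e | c e = i}).Adj u w := by
    rw [deleteEdges_adj]; exact ⟨h1, hne.1⟩
  have a2 : (G.deleteEdges {e | c e = i}).Adj w v := by
    rw [deleteEdges_adj]; exact ⟨h2, hne.2⟩
  exact hI (a1.reachable.trans a2.reachable)

/-- In an MD-coloring, the edges of a triangle sharing vertex `u` get the same color. -/
lemma triangle_eq {c : Sym2 V → ℕ} (hc : isMDColoring G c) {u v w : V}
    (huv : G.Adj u v) (hvw : G.Adj v w) (huw : G.Adj u w) :
    c s(u, v) = c s(u, w) := by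
  obtain ⟨i, hi⟩ := hc u v huv.ne
  have ha : c s(u, v) = i := cut_edge hi huv
  have h2 : c s(u, w) = i ∨ c s(w, v) = i := cut_path2 hi huw hvw.symm
  rcases h2 with h2 | h2
  · rw [ha, h2]
  · -- now c s(v,w) = c s(u,v)
    obtain ⟨j, hj⟩ := hc u w huw.ne
    have hd : c s(u, w) = j := cut_edge hj huw
    have h3 : c s(u, v) = j ∨ c s(v, w) = j := cut_path2 hj huv hvw
    rcases h3 with h3 | h3
    · rw [h3, hd]
    · rw [ha, ← h2, Sym2.eq_swap, h3, hd]

end helpers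

section counting
open SimpleGraph Set
variable {V : Type*} [Fintype V] {G : SimpleGraph V}

/-- Under the density hypothesis, two edges sharing a vertex get the same color. -/
lemma shared_eq {c : Sym2 V → ℕ} (hc : isMDColoring G c)
    (hm : Gᶜ.edgeSet.ncard + 3 ≤ Fintype.card V)
    {u v w : V} (hv : G.Adj u v) (hw : G.Adj u w) :
    c s(u, v) = c s(u, w) := by
  classical
  by_cases hvw : v = w
  · subst hvw; rfl
  by_cases hadj : G.Adj v w
  · exact triangle_eq hc hv hadj hw
  -- v,w nonadjacent; find z adjacent to u,v,w
  have hmem : s(v, w) ∈ Gᶜ.edgeSet := by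
    rw [mem_edgeSet, compl_adj]; exact ⟨hvw, hadj⟩
  by_cases hex : ∃ z, z ≠ u ∧ z ≠ v ∧ z ≠ w ∧ G.Adj u z ∧ G.Adj v z ∧ G.Adj w z
  · obtain ⟨z, hzu, hzv, hzw, hA, hB, hC⟩ := hex
    have e1 : c s(u, v) = c s(u, z) := triangle_eq hc hv hB hA
    have e2 : c s(u, z) = c s(u, w) := triangle_eq hc hA hC.symm hw
    rw [e1, e2]
  -- otherwise, count a contradiction
  exfalso
  push_neg at hex
  set B : Set V := {z | z ≠ u ∧ z ≠ v ∧ z ≠ w} with hB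
  set T : Set (Sym2 V) := Gᶜ.edgeSet \ {s(v, w)} with hT
  set f : V → Sym2 V := fun z =>
    if G.Adj u z then (if G.Adj v z then s(w, z) else s(v, z)) else s(u, z) with hf
  -- f maps B into T
  have hfmem : ∀ z ∈ B, ∃ t, (t = u ∨ t = v ∨ t = w) ∧ f z = s(t, z) ∧ ¬ G.Adj t z := by
    intro z hz
    obtain ⟨h1, h2, h3⟩ := hz
    by_cases hA : G.Adj u z
    · by_cases hB2 : G.Adj v z
      · refine ⟨w, Or.inr (Or.inr rfl), ?_, ?_⟩
        · simp [hf, hA, hB2]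
        · intro hC; exact hex z h1 h2 h3 hA hB2 hC
      · exact ⟨v, Or.inr (Or.inl rfl), by simp [hf, hA, hB2], hB2⟩
    · exact ⟨u, Or.inl rfl, by simp [hf, hA], hA⟩
  have hmaps : ∀ z ∈ B, f z ∈ T := by
    intro z hz
    obtain ⟨t, ht, hfz, hnadj⟩ := hfmem z hz
    obtain ⟨h1, h2, h3⟩ := hz
    have hzt : t ≠ z := by rintro rfl; rcases ht with rfl|rfl|rfl <;> simp_all
    constructor
    · rw [hfz, mem_edgeSet, compl_adj]; exact ⟨hzt, hnadj⟩
    · rw [hfz]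
      simp only [Set.mem_singleton_iff, Sym2.eq_iff]
      rintro (⟨rfl, rfl⟩ | ⟨rfl, rfl⟩) <;> simp_all
  have hinj : Set.InjOn f B := by
    intro z hz z' hz' heq
    obtain ⟨t, ht, hfz, -⟩ := hfmem z hz
    obtain ⟨t', ht', hfz', -⟩ := hfmem z' hz'
    rw [hfz, hfz'] at heq
    rw [Sym2.eq_iff] at heq
    obtain ⟨h1, h2, h3⟩ := hz
    obtain ⟨h1', h2', h3'⟩ := hz'
    rcases heq with ⟨rfl, rfl⟩ | ⟨rfl, rfl⟩
    · rfl
    · rcases ht' with rfl|rfl|rfl <;> simp_all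
  have hcardB : B.ncard = Fintype.card V - 3 := by
    have : B = Set.univ \ {u, v, w} := by
      ext z; simp [hB, and_assoc]
    rw [this, Set.ncard_diff (Set.subset_univ _), Set.ncard_univ, Nat.card_eq_fintype_card]
    congr 1
    rw [Set.ncard_insert_of_notMem (by simp [hv.ne, hw.ne]),
      Set.ncard_pair hvw]
  have hcardT : T.ncard = Gᶜ.edgeSet.ncard - 1 := by
    rw [hT, Set.ncard_diff (Set.singleton_subset_iff.2 hmem), Set.ncard_singleton]
  have hle : B.ncard ≤ T.ncard := Set.ncard_le_ncard_of_injOn f hmaps hinj (Set.toFinite _)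
  rw [hcardB, hcardT] at hle
  have hpos : 1 ≤ Gᶜ.edgeSet.ncard := by
    rw [Nat.one_le_iff_ne_zero]
    intro h0
    exact (Set.eq_empty_iff_forall_notMem.1
      ((Set.ncard_eq_zero (Set.toFinite _)).1 h0)) _ hmem
  omega

/-- walking the graph, all edges hanging off the walk get the same color -/
lemma walk_eq {c : Sym2 V → ℕ} (hc : isMDColoring G c)
    (hm : Gᶜ.edgeSet.ncard + 3 ≤ Fintype.card V) :
    ∀ {u x : V} (_ : G.Walk u x) {v y : V}, G.Adj u v → G.Adj x y →
      c s(u, v) = c s(x, y) := by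
  intro u x p
  induction p with
  | nil => exact fun hv hy => shared_eq hc hm hv hy
  | @cons a b x hab q ih =>
    intro v y hv hy
    calc c s(a, v) = c s(a, b) := shared_eq hc hm hv hab
    _ = c s(b, a) := by rw [Sym2.eq_swap]
    _ = c s(x, y) := ih hab.symm hy

lemma dense_reachable (hm : Gᶜ.edgeSet.ncard + 3 ≤ Fintype.card V) (u v : V) :
    G.Reachable u v := by
  classical
  by_contra hr
  set S : Set V := {x | G.Reachable u x} with hS
  have hu : u ∈ S := Reachable.refl u
  have hv : v ∉ S := hr
  -- every pair (s, t) with s ∈ S, t ∉ S is a complement edge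
  set f : V × V → Sym2 V := fun p => s(p.1, p.2) with hf
  have hmaps : ∀ p ∈ S ×ˢ Sᶜ, f p ∈ Gᶜ.edgeSet := by
    rintro ⟨a, b⟩ ⟨ha, hb⟩
    rw [hf, mem_edgeSet, compl_adj]
    refine ⟨fun h => hb (h ▸ ha), fun hadj => hb ?_⟩
    exact (Set.mem_setOf_eq ▸ ha).trans hadj.reachable
  have hinj : Set.InjOn f (S ×ˢ Sᶜ) := by
    rintro ⟨a, b⟩ ⟨ha, hb⟩ ⟨a', b'⟩ ⟨ha', hb'⟩ heq
    rw [hf, Sym2.eq_iff] at heq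
    rcases heq with ⟨rfl, rfl⟩ | ⟨rfl, rfl⟩
    · rfl
    · exact absurd ha' hb
  have hle : (S ×ˢ Sᶜ).ncard ≤ Gᶜ.edgeSet.ncard :=
    Set.ncard_le_ncard_of_injOn f hmaps hinj (Set.toFinite _)
  have hprod : (S ×ˢ Sᶜ).ncard = S.ncard * Sᶜ.ncard := by
    rw [Set.ncard_eq_toFinset_card', Set.toFinset_prod, Finset.card_product,
      ← Set.ncard_eq_toFinset_card', ← Set.ncard_eq_toFinset_card']
  have hsum : S.ncard + Sᶜ.ncard = Fintype.card V := by
    rw [Set.ncard_add_ncard_compl]; exact Nat.card_eq_fintype_card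
  have hS1 : 1 ≤ S.ncard := by
    rw [Nat.one_le_iff_ne_zero]
    intro h0
    exact (Set.eq_empty_iff_forall_notMem.1 ((Set.ncard_eq_zero (Set.toFinite _)).1 h0)) _ hu
  have hS2 : 1 ≤ Sᶜ.ncard := by
    rw [Nat.one_le_iff_ne_zero]
    intro h0
    exact (Set.eq_empty_iff_forall_notMem.1 ((Set.ncard_eq_zero (Set.toFinite _)).1 h0)) _ hv
  -- a*b ≥ a + b - 1
  obtain ⟨a, ha⟩ := Nat.exists_eq_add_of_le hS1
  obtain ⟨b, hb⟩ := Nat.exists_eq_add_of_le hS2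
  rw [hprod, ha, hb] at hle
  have hkey : 1 + a + b ≤ (1 + a) * (1 + b) := by nlinarith
  have hle' : 1 + a + b ≤ Gᶜ.edgeSet.ncard := le_trans hkey hle
  omega

lemma mono_color {c : Sym2 V → ℕ} (hc : isMDColoring G c)
    (hm : Gᶜ.edgeSet.ncard + 3 ≤ Fintype.card V) :
    ∀ e ∈ G.edgeSet, ∀ f ∈ G.edgeSet, c e = c f := by
  intro e he f hf
  induction e using Sym2.ind with | _ a b =>
  induction f using Sym2.ind with | _ x y =>
  rw [mem_edgeSet] at he hf
  obtain ⟨p⟩ := dense_reachable hm a x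
  exact walk_eq hc hm p he hf

end counting

section assembly
open SimpleGraph Set

lemma mdNum_eq_of {V : Type*} (G : SimpleGraph V) (k : ℕ)
    (hk : ∃ c : Sym2 V → ℕ, isMDColoring G c ∧ (c '' G.edgeSet).ncard = k)
    (hb : ∀ j : ℕ, (∃ c : Sym2 V → ℕ, isMDColoring G c ∧ (c '' G.edgeSet).ncard = j) → j ≤ k) :
    mdNum G = k := by
  unfold mdNum
  exact le_antisymm (csSup_le ⟨k, hk⟩ fun j hj => hb j hj) (le_csSup ⟨k, fun j hj => hb j hj⟩ hk)

lemma edge_compl_count {V : Type*} [Fintype V] (G : SimpleGraph V) :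
    G.edgeSet.ncard + Gᶜ.edgeSet.ncard = (Fintype.card V).choose 2 := by
  classical
  have hsup : G ⊔ Gᶜ = ⊤ := sup_compl_eq_top
  have hdisj : Disjoint G.edgeSet Gᶜ.edgeSet :=
    (SimpleGraph.disjoint_edgeSet).2 disjoint_compl_right
  have h1 : (⊤ : SimpleGraph V).edgeSet.ncard = G.edgeSet.ncard + Gᶜ.edgeSet.ncard := by
    rw [← hsup, edgeSet_sup, Set.ncard_union_eq hdisj (Set.toFinite _) (Set.toFinite _)]
  rw [← h1]
  have h2 : (⊤ : SimpleGraph V).edgeSet.ncard = (⊤ : SimpleGraph V).edgeFinset.card := by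
    rw [← Nat.card_coe_set_eq, Nat.card_eq_fintype_card, SimpleGraph.edgeFinset_card]
  rw [h2, SimpleGraph.card_edgeFinset_top_eq_card_choose_two]

/-- The constant coloring is an MD-coloring. -/
lemma const_isMD {V : Type*} (G : SimpleGraph V) : isMDColoring G (fun _ => 0) := by
  intro u v huv
  refine ⟨0, not_reachable_of_closed (S := {u}) ?_ rfl (by simpa using huv.symm)⟩
  rintro x rfl y hy
  rw [deleteEdges_adj] at hy
  exact absurd rfl hy.2

theorem part1 {V : Type} [Fintype V] (G : SimpleGraph V) (n : ℕ) (hn : 4 ≤ n)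
    (hcard : Fintype.card V = n) (hE : (n - 1).choose 2 + 2 ≤ G.edgeSet.ncard) :
    mdNum G = 1 := by
  obtain ⟨m, rfl⟩ : ∃ m, n = m + 4 := ⟨n - 4, by omega⟩
  have hch : (m + 4).choose 2 = (m + 3).choose 2 + (m + 3) := by
    rw [show m + 4 = (m + 3) + 1 from rfl, Nat.choose_succ_succ (m + 3) 1,
      Nat.choose_one_right, Nat.add_comm]
  have hE' : (m + 3).choose 2 + 2 ≤ G.edgeSet.ncard := by
    have : m + 4 - 1 = m + 3 := by omega
    rwa [this] at hE
  have htot := edge_compl_count G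
  rw [hcard, hch] at htot
  have hm : Gᶜ.edgeSet.ncard + 3 ≤ Fintype.card V := by rw [hcard]; omega
  have hne : G.edgeSet.Nonempty := by
    rw [← Set.ncard_pos (Set.toFinite _)]; omega
  obtain ⟨e₀, he₀⟩ := hne
  refine mdNum_eq_of G 1 ⟨fun _ => 0, const_isMD G, ?_⟩ ?_
  · rw [show ((fun (_ : Sym2 V) => 0) '' G.edgeSet) = {0} from
      Set.Nonempty.image_const ⟨e₀, he₀⟩ 0, Set.ncard_singleton]
  · rintro j ⟨c, hc, rfl⟩
    have hsub : c '' G.edgeSet ⊆ {c e₀} := by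
      rintro y ⟨e, he, rfl⟩
      exact mono_color hc hm e he e₀ he₀
    calc (c '' G.edgeSet).ncard ≤ ({c e₀} : Set ℕ).ncard :=
          Set.ncard_le_ncard hsub (Set.toFinite _)
    _ = 1 := Set.ncard_singleton _

end assembly

section pendant
open SimpleGraph Set

variable (m : ℕ)

def pL : Fin (m + 4) := ⟨m + 3, by omega⟩
def pZ : Fin (m + 4) := ⟨0, by omega⟩
def pO : Fin (m + 4) := ⟨1, by omega⟩

lemma pZ_ne_pL : pZ m ≠ pL m := by simp [pZ, pL, Fin.ext_iff]
lemma pO_ne_pL : pO m ≠ pL m := by simp [pO, pL, Fin.ext_iff]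
lemma pZ_ne_pO : pZ m ≠ pO m := by simp [pZ, pO, Fin.ext_iff]

/-- The complete graph on `n-1` vertices with a pendant edge attached. -/
def Hgraph : SimpleGraph (Fin (m + 4)) :=
  SimpleGraph.fromEdgeSet {e | (¬ e.IsDiag ∧ pL m ∉ e) ∨ e = s(pZ m, pL m)}

lemma Hadj {a b : Fin (m + 4)} :
    (Hgraph m).Adj a b ↔ (a ≠ b ∧ a ≠ pL m ∧ b ≠ pL m) ∨ s(a, b) = s(pZ m, pL m) := by
  rw [Hgraph, fromEdgeSet_adj]
  simp only [Set.mem_setOf_eq, Sym2.mem_iff, Sym2.mk_isDiag_iff]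
  constructor
  · rintro ⟨h | h, hne⟩
    · exact Or.inl ⟨hne, fun hL => h.2 (Or.inl hL.symm), fun hL => h.2 (Or.inr hL.symm)⟩
    · exact Or.inr h
  · rintro (⟨h1, h2, h3⟩ | h)
    · refine ⟨Or.inl ⟨h1, ?_⟩, h1⟩
      rintro (rfl | rfl)
      · exact h2 rfl
      · exact h3 rfl
    · refine ⟨Or.inr h, ?_⟩
      rintro rfl
      rw [Sym2.eq_iff] at h
      rcases h with ⟨h1, h2⟩ | ⟨h1, h2⟩
      · exact pZ_ne_pL m (h1.symm.trans h2)
      · exact pZ_ne_pL m (h2.symm.trans h1)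

lemma Hadj_clique {a b : Fin (m + 4)} (ha : a ≠ pL m) (hb : b ≠ pL m) (hab : a ≠ b) :
    (Hgraph m).Adj a b := (Hadj m).2 (Or.inl ⟨hab, ha, hb⟩)

lemma Hadj_pend : (Hgraph m).Adj (pZ m) (pL m) := (Hadj m).2 (Or.inr rfl)

lemma Hconn : (Hgraph m).Connected := by
  rw [connected_iff]
  refine ⟨fun u v => ?_, ⟨pZ m⟩⟩
  have hZ : ∀ x, (Hgraph m).Reachable x (pZ m) := by
    intro x
    by_cases hx : x = pZ m
    · exact hx ▸ Reachable.refl _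
    by_cases hL : x = pL m
    · subst hL
      exact (Hadj_pend m).symm.reachable
    · exact (Hadj_clique m hL (pZ_ne_pL m) hx).reachable
  exact (hZ u).trans (hZ v).symm

lemma ncard_top_edge {V : Type*} [Fintype V] :
    (⊤ : SimpleGraph V).edgeSet.ncard = (Fintype.card V).choose 2 := by
  classical
  rw [← Nat.card_coe_set_eq, Nat.card_eq_fintype_card, ← SimpleGraph.edgeFinset_card,
    SimpleGraph.card_edgeFinset_top_eq_card_choose_two]

lemma Hcount : (Hgraph m).edgeSet.ncard = (m + 4 - 1).choose 2 + 1 := by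
  classical
  have hpd : ¬ (s(pZ m, pL m) : Sym2 (Fin (m+4))).IsDiag := by
    rw [Sym2.mk_isDiag_iff]; exact pZ_ne_pL m
  have hedge : (Hgraph m).edgeSet
      = ({e : Sym2 (Fin (m+4)) | ¬ e.IsDiag} \ {e | ¬ e.IsDiag ∧ pL m ∈ e})
        ∪ {s(pZ m, pL m)} := by
    rw [Hgraph, edgeSet_fromEdgeSet]
    ext e
    simp only [Set.mem_diff, Set.mem_setOf_eq, Set.mem_union, Set.mem_singleton_iff]
    constructor
    · rintro ⟨h | h, hd⟩
      · exact Or.inl ⟨hd, fun hh => h.2 hh.2⟩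
      · exact Or.inr h
    · rintro (⟨h1, h2⟩ | rfl)
      · exact ⟨Or.inl ⟨h1, fun hL => h2 ⟨h1, hL⟩⟩, h1⟩
      · exact ⟨Or.inr rfl, hpd⟩
  have hB : {e : Sym2 (Fin (m+4)) | ¬ e.IsDiag ∧ pL m ∈ e}
      = (fun x => s(pL m, x)) '' {x | x ≠ pL m} := by
    ext e
    induction e using Sym2.ind with | _ a b =>
    simp only [Set.mem_setOf_eq, Sym2.mk_isDiag_iff, Sym2.mem_iff, Set.mem_image]
    constructor
    · rintro ⟨hd, rfl | rfl⟩
      · exact ⟨b, fun hh => hd hh.symm, rfl⟩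
      · exact ⟨a, fun hh => hd hh, Sym2.eq_swap⟩
    · rintro ⟨x, hx, hh⟩
      rw [Sym2.eq_iff] at hh
      rcases hh with ⟨rfl, rfl⟩ | ⟨rfl, rfl⟩
      · exact ⟨fun hh => hx hh.symm, Or.inl rfl⟩
      · exact ⟨hx, Or.inr rfl⟩
  have hcardB : ({e : Sym2 (Fin (m+4)) | ¬ e.IsDiag ∧ pL m ∈ e}).ncard = m + 3 := by
    rw [hB, Set.ncard_image_of_injOn (fun x hx y hy hxy => by
      rw [Sym2.eq_iff] at hxy
      rcases hxy with ⟨-, h⟩ | ⟨h1, h2⟩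
      · exact h
      · exact absurd h2 hx)]
    have h1 : {x : Fin (m+4) | x ≠ pL m} = ({pL m} : Set (Fin (m+4)))ᶜ := by
      ext x; simp
    have h2 := Set.ncard_add_ncard_compl ({pL m} : Set (Fin (m+4)))
    rw [Set.ncard_singleton, Nat.card_eq_fintype_card, Fintype.card_fin] at h2
    rw [h1]; omega
  have hchoose : (m + 4).choose 2 = (m + 3).choose 2 + (m + 3) := by
    rw [show m + 4 = (m + 3) + 1 from rfl, Nat.choose_succ_succ (m + 3) 1,
      Nat.choose_one_right, Nat.add_comm]
  have hsub : {e : Sym2 (Fin (m+4)) | ¬ e.IsDiag ∧ pL m ∈ e}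
      ⊆ {e : Sym2 (Fin (m+4)) | ¬ e.IsDiag} := fun e he => he.1
  have hA : ({e : Sym2 (Fin (m+4)) | ¬ e.IsDiag} \ {e | ¬ e.IsDiag ∧ pL m ∈ e}).ncard
      = (m + 4).choose 2 - (m + 3) := by
    rw [Set.ncard_diff hsub (Set.toFinite _), hcardB]
    congr 1
    rw [show {e : Sym2 (Fin (m+4)) | ¬ e.IsDiag} = (⊤ : SimpleGraph (Fin (m+4))).edgeSet
      from (edgeSet_top).symm, ncard_top_edge, Fintype.card_fin]
  have hnotmem : (s(pZ m, pL m) : Sym2 (Fin (m+4)))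
      ∉ ({e : Sym2 (Fin (m+4)) | ¬ e.IsDiag} \ {e | ¬ e.IsDiag ∧ pL m ∈ e}) := by
    rintro ⟨h1, h2⟩
    exact h2 ⟨hpd, Sym2.mem_mk_right _ _⟩
  rw [hedge, Set.union_singleton, Set.ncard_insert_of_notMem hnotmem (Set.toFinite _), hA]
  have hle : m + 3 ≤ (m + 4).choose 2 := by omega
  rw [show m + 4 - 1 = m + 3 from rfl]
  omega

end pendant

section pendantMD
open SimpleGraph Set

variable (m : ℕ)

/-- In any MD-coloring of `Hgraph`, all clique edges get the same color. -/
lemma Hclique_color {c : Sym2 (Fin (m+4)) → ℕ} (hc : isMDColoring (Hgraph m) c)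
    {a b x y : Fin (m+4)} (ha : a ≠ pL m) (hb : b ≠ pL m) (hx : x ≠ pL m) (hy : y ≠ pL m)
    (hab : a ≠ b) (hxy : x ≠ y) : c s(a, b) = c s(x, y) := by
  have hsh : ∀ p q r : Fin (m+4), p ≠ pL m → q ≠ pL m → r ≠ pL m → p ≠ q → p ≠ r →
      c s(p, q) = c s(p, r) := by
    intro p q r hp hq hr hpq hpr
    by_cases hqr : q = r
    · rw [hqr]
    · exact triangle_eq hc (Hadj_clique m hp hq hpq) (Hadj_clique m hq hr hqr)
        (Hadj_clique m hp hr hpr)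
  by_cases hax : a = x
  · subst hax
    by_cases hby : b = y
    · rw [hby]
    · exact hsh a b y hx hb hy hab hxy
  by_cases hay : a = y
  · subst hay
    rw [show s(x, a) = s(a, x) from Sym2.eq_swap]
    exact hsh a b x ha hb hx hab hax
  · calc c s(a, b) = c s(a, x) := by
          by_cases hbx : b = x
          · rw [hbx]
          · exact hsh a b x ha hb hx hab hax
    _ = c s(x, a) := by rw [Sym2.eq_swap]
    _ = c s(x, y) := hsh x a y hx ha hy (fun h => hax h.symm) hxy

/-- The explicit 2-coloring of `Hgraph`. -/
def pcol : Sym2 (Fin (m+4)) → ℕ := fun e => if e = s(pZ m, pL m) then 1 else 0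

lemma pcol_isMD : isMDColoring (Hgraph m) (pcol m) := by
  classical
  have hLiso : ∀ w : Fin (m+4), w ≠ pL m →
      ¬ ((Hgraph m).deleteEdges {e | pcol m e = 1}).Reachable (pL m) w := by
    intro w hw
    refine not_reachable_of_closed (S := {pL m}) ?_ rfl (by simpa using hw)
    rintro x rfl y hy
    rw [deleteEdges_adj] at hy
    obtain ⟨hA, hn⟩ := hy
    rcases (Hadj m).1 hA with ⟨-, h2, -⟩ | h
    · exact absurd rfl h2
    · exact absurd (by simp only [Set.mem_setOf_eq, pcol, if_pos h]) hn
  intro u v huv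
  by_cases hu : u = pL m
  · exact ⟨1, hu ▸ hLiso v (fun h => huv (hu.trans h.symm))⟩
  by_cases hv : v = pL m
  · exact ⟨1, fun hr => hLiso u hu (hv ▸ hr.symm)⟩
  · refine ⟨0, ?_⟩
    have hkey : ∀ x y : Fin (m+4),
        ((Hgraph m).deleteEdges {e | pcol m e = 0}).Adj x y → s(x, y) = s(pZ m, pL m) := by
      intro x y hy
      rw [deleteEdges_adj] at hy
      obtain ⟨hA, hn⟩ := hy
      simp only [Set.mem_setOf_eq, pcol] at hn
      by_cases h : s(x, y) = s(pZ m, pL m)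
      · exact h
      · exact absurd (if_neg h) hn
    by_cases hz : u = pZ m
    · refine not_reachable_of_closed (S := {pZ m, pL m}) ?_ (Or.inl hz) ?_
      · intro x hx y hy
        have := hkey x y hy
        rw [Sym2.eq_iff] at this
        rcases this with ⟨-, rfl⟩ | ⟨-, rfl⟩
        · exact Or.inr rfl
        · exact Or.inl rfl
      · rintro (h | h)
        · exact huv (hz.trans h.symm)
        · exact hv h
    · refine not_reachable_of_closed (S := {u}) ?_ rfl (by simpa using fun h => huv h.symm)
      rintro x rfl y hy
      have := hkey x y hy
      rw [Sym2.eq_iff] at this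
      rcases this with ⟨h1, -⟩ | ⟨h1, -⟩
      · exact absurd h1 hz
      · exact absurd h1 hu

lemma pcol_image : (pcol m) '' (Hgraph m).edgeSet = {0, 1} := by
  classical
  ext y
  constructor
  · rintro ⟨e, -, rfl⟩
    by_cases h : e = s(pZ m, pL m)
    · right; simp [pcol, h]
    · left; simp [pcol, h]
  · rintro (rfl | rfl)
    · refine ⟨s(pZ m, pO m), (SimpleGraph.mem_edgeSet _).2 (Hadj_clique m (pZ_ne_pL m) (pO_ne_pL m) (pZ_ne_pO m)), ?_⟩
      have : (s(pZ m, pO m) : Sym2 (Fin (m+4))) ≠ s(pZ m, pL m) := by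
        rw [Ne, Sym2.eq_iff]
        rintro (⟨-, h⟩ | ⟨h, -⟩)
        · exact pO_ne_pL m h
        · exact pZ_ne_pL m h
      simp [pcol, this]
    · exact ⟨s(pZ m, pL m), (SimpleGraph.mem_edgeSet _).2 (Hadj_pend m), by simp [pcol]⟩

lemma HmdNum : mdNum (Hgraph m) = 2 := by
  classical
  refine mdNum_eq_of _ 2 ⟨pcol m, pcol_isMD m, by rw [pcol_image m]; exact Set.ncard_pair (by norm_num)⟩ ?_
  rintro j ⟨c, hc, rfl⟩
  have hsub : c '' (Hgraph m).edgeSet ⊆ {c s(pZ m, pO m), c s(pZ m, pL m)} := by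
    rintro y ⟨e, he, rfl⟩
    induction e using Sym2.ind with | _ a b =>
    rw [mem_edgeSet] at he
    rcases (Hadj m).1 he with ⟨hab, ha, hb⟩ | h
    · exact Or.inl (Hclique_color m hc ha hb (pZ_ne_pL m) (pO_ne_pL m) hab (pZ_ne_pO m))
    · exact Or.inr (by rw [h]; rfl)
  calc (c '' (Hgraph m).edgeSet).ncard
      ≤ ({c s(pZ m, pO m), c s(pZ m, pL m)} : Set ℕ).ncard :=
        Set.ncard_le_ncard hsub (Set.toFinite _)
    _ ≤ 2 := by
        refine le_trans (Set.ncard_insert_le _ _) ?_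
        rw [Set.ncard_singleton]

end pendantMD


theorem dense_md (n : ℕ) (hn : 4 ≤ n) :
    (∀ (V : Type) [Fintype V], ∀ G : SimpleGraph V, Fintype.card V = n →
      (n - 1).choose 2 + 2 ≤ G.edgeSet.ncard → mdNum G = 1) ∧
    ∃ H : SimpleGraph (Fin n), H.Connected ∧
      H.edgeSet.ncard = (n - 1).choose 2 + 1 ∧ mdNum H = 2 := by
  constructor
  · intro V _ G hcard hE
    exact part1 G n hn hcard hE
  · obtain ⟨m, rfl⟩ : ∃ m, n = m + 4 := ⟨n - 4, by omega⟩
    exact ⟨Hgraph m, Hconn m, Hcount m, HmdNum m⟩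
end

section
/- Let G' be a connected graph, c a vertex of G' with degree 2 and incident edges e_1 = ac, e_2 = bc, and let G be obtained from G' by splitting off e_1 and e_2, i.e., deleting c and adding the edge ab. Then md(G) ≤ md(G'). -/
lemma reach_eq_of_no_adj {V : Type*} {H : SimpleGraph V} {c v : V}
    (h : ∀ w, ¬ H.Adj c w) (r : H.Reachable c v) : c = v := by
  obtain ⟨p⟩ := r
  cases p with
  | nil => rfl
  | cons h' _ => exact absurd h' (h _)

theorem splitOff_md {V : Type*} [Fintype V] (G' : SimpleGraph V) (hG' : G'.Connected)
    (a b c : V) (hab : a ≠ b) (hN : G'.neighborSet c = {a, b})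
    (G : SimpleGraph {x : V // x ≠ c})
    (hG : ∀ x y : {x : V // x ≠ c}, G.Adj x y ↔
      G'.Adj x.1 y.1 ∨ (x.1 = a ∧ y.1 = b) ∨ (x.1 = b ∧ y.1 = a)) :
    mdNum G ≤ mdNum G' := by
  have hca : G'.Adj c a := by rw [← SimpleGraph.mem_neighborSet, hN]; left; rfl
  have hcb : G'.Adj c b := by rw [← SimpleGraph.mem_neighborSet, hN]; right; rfl
  have hac : a ≠ c := hca.ne'
  have hbc : b ≠ c := hcb.ne'
  set A : {x : V // x ≠ c} := ⟨a, hac⟩ with hA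
  set B : {x : V // x ≠ c} := ⟨b, hbc⟩ with hB
  have hAB : G.Adj A B := by rw [hG]; right; left; exact ⟨rfl, rfl⟩
  -- membership in neighborSet
  have hmem : ∀ w, G'.Adj c w → w = a ∨ w = b := by
    intro w hw
    have : w ∈ G'.neighborSet c := hw
    rw [hN] at this
    exact this
  apply csSup_le_csSup
  · -- BddAbove
    refine ⟨Fintype.card (Sym2 V) + 1, ?_⟩
    rintro n ⟨κ, _, rfl⟩
    have h1 : (κ '' G'.edgeSet).ncard ≤ G'.edgeSet.ncard := Set.ncard_image_le (Set.toFinite _)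
    have h2 : G'.edgeSet.ncard ≤ (Set.univ : Set (Sym2 V)).ncard :=
      Set.ncard_le_ncard (Set.subset_univ _) (Set.toFinite _)
    have h3 : (Set.univ : Set (Sym2 V)).ncard = Fintype.card (Sym2 V) := by
      simp [Set.ncard_univ, Nat.card_eq_fintype_card]
    omega
  · -- Nonempty
    refine ⟨((fun _ => 0) '' G.edgeSet).ncard, fun _ => 0, ?_, rfl⟩
    intro u v huv
    refine ⟨0, fun r => huv ?_⟩
    have : {e : Sym2 {x : V // x ≠ c} | (0 : ℕ) = 0} = Set.univ := by ext; simp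
    rw [this] at r
    have hbot : G.deleteEdges Set.univ = ⊥ := by
      ext x y; simp [SimpleGraph.deleteEdges_adj]
    rw [hbot, SimpleGraph.reachable_bot] at r
    exact r
  · -- subset
    rintro n ⟨κ, hκ, rfl⟩
    classical
    set g' : V → {x : V // x ≠ c} := fun x => if h : x = c then A else ⟨x, h⟩ with hg'
    set c' : Sym2 V → ℕ := fun e => if c ∈ e then κ s(A, B) else κ (Sym2.map g' e) with hc'
    have hg'ne : ∀ (x : V) (h : x ≠ c), g' x = ⟨x, h⟩ := fun x h => dif_neg h
    have hmap : ∀ (x y : V) (hx : x ≠ c) (hy : y ≠ c),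
        c' s(x, y) = κ s(⟨x, hx⟩, ⟨y, hy⟩) := by
      intro x y hx hy
      have hcm : c ∉ s(x, y) := by
        rw [Sym2.mem_iff]
        push_neg
        exact ⟨Ne.symm hx, Ne.symm hy⟩
      simp only [hc', if_neg hcm, Sym2.map_pair_eq]
      rw [hg'ne x hx, hg'ne y hy]
    have hmapc : ∀ e : Sym2 V, c ∈ e → c' e = κ s(A, B) := by
      intro e he; simp only [hc', if_pos he]
    refine ⟨c', ?_, ?_⟩
    · -- MD coloring of G'
      intro u v huv
      by_cases hu : u = c
      · subst hu
        refine ⟨κ s(A, B), fun r => huv ?_⟩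
        refine reach_eq_of_no_adj (fun w hw => ?_) r
        rw [SimpleGraph.deleteEdges_adj] at hw
        exact hw.2 (hmapc s(u, w) (by simp) : _)
      by_cases hv : v = c
      · subst hv
        refine ⟨κ s(A, B), fun r => huv ?_⟩
        refine (reach_eq_of_no_adj (fun w hw => ?_) r.symm).symm
        rw [SimpleGraph.deleteEdges_adj] at hw
        exact hw.2 (hmapc s(v, w) (by simp) : _)
      · -- both ≠ c
        obtain ⟨i, hi⟩ := hκ ⟨u, hu⟩ ⟨v, hv⟩ (by simp [Subtype.ext_iff, huv])
        refine ⟨i, fun r => hi ?_⟩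
        obtain ⟨p⟩ := r
        clear huv
        -- strong induction on length
        suffices h : ∀ n (x y : V) (hx : x ≠ c) (hy : y ≠ c)
            (q : (G'.deleteEdges {e | c' e = i}).Walk x y), q.length ≤ n →
            (G.deleteEdges {e | κ e = i}).Reachable ⟨x, hx⟩ ⟨y, hy⟩ by
          exact h p.length u v hu hv p le_rfl
        intro n
        induction n with
        | zero =>
          intro x y hx hy q hq
          cases q with
          | nil => rfl
          | cons h' q' => simp at hq
        | succ n ih =>
          intro x y hx hy q hq
          cases q with
          | nil => rfl
          | @cons _ w _ h' q' =>
            rw [SimpleGraph.deleteEdges_adj] at h'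
            by_cases hw : w = c
            · rw [hw] at h'
              -- next edge
              cases q' with
              | nil => exact absurd hw hy
              | @cons _ w2 _ h2 q'' =>
                rw [SimpleGraph.deleteEdges_adj] at h2
                rw [hw] at h2
                have hw2 : w2 ≠ c := h2.1.ne'
                have hABi : κ s(A, B) ≠ i := by
                  intro h
                  exact h'.2 (by rw [Set.mem_setOf_eq, hmapc s(x, c) (by simp)]; exact h)
                have hABadj : (G.deleteEdges {e | κ e = i}).Adj A B := by
                  rw [SimpleGraph.deleteEdges_adj]; exact ⟨hAB, hABi⟩
                have hxab : x = a ∨ x = b := hmem x h'.1.symm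
                have hw2ab : w2 = a ∨ w2 = b := hmem w2 h2.1
                have hreach : (G.deleteEdges {e | κ e = i}).Reachable ⟨x, hx⟩ ⟨w2, hw2⟩ := by
                  rcases hxab with rfl | rfl <;> rcases hw2ab with h3 | h3 <;>
                    simp only [h3] <;>
                    first
                      | rfl
                      | exact hABadj.reachable
                      | exact hABadj.symm.reachable
                refine hreach.trans (ih w2 y hw2 hy q'' ?_)
                simp only [SimpleGraph.Walk.length_cons] at hq
                omega
            · have hadj : (G.deleteEdges {e | κ e = i}).Adj ⟨x, hx⟩ ⟨w, hw⟩ := by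
                rw [SimpleGraph.deleteEdges_adj]
                constructor
                · rw [hG]; left; exact h'.1
                · intro h
                  refine h'.2 ?_
                  rw [Set.mem_setOf_eq, hmap x w hx hw]
                  exact h
              refine hadj.reachable.trans (ih w y hw hy q' ?_)
              simp only [SimpleGraph.Walk.length_cons] at hq
              omega
    · -- ncard equality
      congr 1
      apply Set.eq_of_subset_of_subset
      · rintro j ⟨e, he, rfl⟩
        induction e using Sym2.ind with
        | _ x y =>
          by_cases hce : c ∈ s(x, y)
          · rw [hmapc _ hce]
            exact ⟨s(A, B), hAB, rfl⟩
          · rw [Sym2.mem_iff] at hce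
            push_neg at hce
            have hx : x ≠ c := Ne.symm hce.1
            have hy : y ≠ c := Ne.symm hce.2
            rw [hmap x y hx hy]
            refine ⟨s(⟨x, hx⟩, ⟨y, hy⟩), ?_, rfl⟩
            rw [SimpleGraph.mem_edgeSet, hG]
            left
            exact he
      · rintro j ⟨e, he, rfl⟩
        induction e using Sym2.ind with
        | _ X Y =>
          rw [SimpleGraph.mem_edgeSet, hG] at he
          rcases he with h | ⟨h1, h2⟩ | ⟨h1, h2⟩
          · refine ⟨s(X.1, Y.1), h, ?_⟩
            rw [hmap X.1 Y.1 X.2 Y.2]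
          · have hX : X = A := Subtype.ext h1
            have hY : Y = B := Subtype.ext h2
            subst hX; subst hY
            exact ⟨s(a, c), hca.symm, hmapc _ (by simp)⟩
          · have hX : X = B := Subtype.ext h1
            have hY : Y = A := Subtype.ext h2
            subst hX; subst hY
            refine ⟨s(a, c), hca.symm, ?_⟩
            rw [hmapc _ (by simp), Sym2.eq_swap]
end

section
/- Let M be a minimal matching cut of a connected graph G, and let G' be the underlying simple graph of G/M (the graph obtained by contracting all edges of M). Then md(G') ≤ md(G) - 1. -/
private lemma reach_map {V W : Type*} {H : SimpleGraph V} {H' : SimpleGraph W} (g : V → W)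
    (hadj : ∀ a b : V, H.Adj a b → H'.Reachable (g a) (g b)) :
    ∀ {u v : V}, H.Reachable u v → H'.Reachable (g u) (g v) := by
  intro u v h
  obtain ⟨w⟩ := h
  induction w with
  | nil => exact SimpleGraph.Reachable.refl _
  | cons h p ih => exact (hadj _ _ h).trans ih

theorem contract_matchingCut_md {V W : Type*} [Fintype V] [Fintype W]
    (G : SimpleGraph V) (hG : G.Connected) (M : Set (Sym2 V)) (hMe : M ⊆ G.edgeSet)
    (hmatch : ∀ e ∈ M, ∀ f ∈ M, e ≠ f → ∀ v : V, v ∈ e → v ∉ f)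
    (hcut : ¬ (G.deleteEdges M).Preconnected)
    (hmin : ∀ M' ⊆ M, M' ≠ M → (G.deleteEdges M').Preconnected)
    (f : V → W) (hf : Function.Surjective f)
    (hfid : ∀ u v : V, f u = f v ↔ u = v ∨ s(u, v) ∈ M)
    (G' : SimpleGraph W)
    (hG' : ∀ x y : W, G'.Adj x y ↔ x ≠ y ∧ ∃ u v : V, f u = x ∧ f v = y ∧ G.Adj u v) :
    mdNum G' ≤ mdNum G - 1 := by
  classical
  -- M is nonempty
  have hMne : M.Nonempty := by
    by_contra h
    rw [Set.not_nonempty_iff_eq_empty] at h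
    subst h
    rw [SimpleGraph.deleteEdges_empty] at hcut
    exact hcut hG.preconnected
  -- endpoints of an edge of M are disconnected in G - M
  have hkey : ∀ u v : V, s(u, v) ∈ M → ¬ (G.deleteEdges M).Reachable u v := by
    intro u v huv hreach
    apply hcut
    have hM' := hmin (M \ {s(u, v)}) Set.diff_subset (by
      intro h
      have h2 : s(u, v) ∉ M \ {s(u, v)} := by simp
      rw [h] at h2; exact h2 huv)
    intro x y
    refine reach_map id ?_ (hM' x y)
    intro a b hab
    rw [SimpleGraph.deleteEdges_adj] at hab
    obtain ⟨hab, hnm⟩ := hab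
    by_cases hm : s(a, b) ∈ M
    · have heq : s(a, b) = s(u, v) := by
        by_contra hne
        exact hnm ⟨hm, hne⟩
      rw [Sym2.eq_iff] at heq
      rcases heq with ⟨rfl, rfl⟩ | ⟨rfl, rfl⟩
      · exact hreach
      · exact hreach.symm
    · exact SimpleGraph.Adj.reachable
        (SimpleGraph.deleteEdges_adj.mpr ⟨hab, hm⟩)
  have hbdd : BddAbove {n | ∃ c : Sym2 V → ℕ, isMDColoring G c ∧ (c '' G.edgeSet).ncard = n} := by
    refine ⟨(G.edgeSet).ncard, ?_⟩
    rintro n ⟨c, _, rfl⟩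
    exact Set.ncard_image_le (Set.toFinite _)
  rw [mdNum, mdNum]
  apply csSup_le'
  rintro n ⟨c', hc', hn⟩
  set c : Sym2 V → ℕ := fun e => if e ∈ M then 0 else (c' (Sym2.map f e)) + 1 with hcdef
  have hclass0 : {e | c e = 0} = M := by
    ext e
    simp only [Set.mem_setOf_eq, hcdef]
    by_cases h : e ∈ M <;> simp [h]
  -- c is an MD-coloring of G
  have hmd : isMDColoring G c := by
    intro u v huv
    by_cases h : f u = f v
    · refine ⟨0, ?_⟩
      rw [hclass0]
      exact hkey u v (((hfid u v).mp h).resolve_left huv)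
    · obtain ⟨i, hi⟩ := hc' (f u) (f v) h
      refine ⟨i + 1, fun hr => hi ?_⟩
      refine reach_map f ?_ hr
      intro a b hab
      rw [SimpleGraph.deleteEdges_adj] at hab
      obtain ⟨hab, hcl⟩ := hab
      simp only [Set.mem_setOf_eq] at hcl
      by_cases hm : s(a, b) ∈ M
      · have hfab : f a = f b := (hfid a b).mpr (Or.inr hm)
        rw [hfab]
      · have hcc : c s(a, b) = c' s(f a, f b) + 1 := by
          simp [hcdef, hm, Sym2.map_pair_eq]
        have hfab : f a ≠ f b := by
          intro he
          rcases (hfid a b).mp he with rfl | hmm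
          · exact hab.ne rfl
          · exact hm hmm
        refine SimpleGraph.Adj.reachable ?_
        rw [SimpleGraph.deleteEdges_adj]
        refine ⟨(hG' _ _).mpr ⟨hfab, a, b, rfl, rfl, hab⟩, ?_⟩
        simp only [Set.mem_setOf_eq]
        intro hbad
        rw [hcc, hbad] at hcl
        exact hcl rfl
  -- the lifted coloring uses at least n + 1 colors
  have hsub : insert 0 ((· + 1) '' (c' '' G'.edgeSet)) ⊆ c '' G.edgeSet := by
    rintro j hj
    rcases hj with rfl | ⟨j', ⟨e', he', rfl⟩, rfl⟩
    · obtain ⟨e₀, he₀⟩ := hMne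
      exact ⟨e₀, hMe he₀, by simp [hcdef, he₀]⟩
    · induction e' using Sym2.ind with
      | _ x y =>
        rw [SimpleGraph.mem_edgeSet] at he'
        obtain ⟨hxy, u, v, hu, hv, huv⟩ := (hG' x y).mp he'
        have hm : s(u, v) ∉ M := by
          intro hmm
          exact hxy (hu ▸ hv ▸ (hfid u v).mpr (Or.inr hmm))
        refine ⟨s(u, v), huv, ?_⟩
        simp [hcdef, hm, Sym2.map_pair_eq, hu, hv]
  have hcard : n + 1 ≤ (c '' G.edgeSet).ncard := by
    have h1 : (insert 0 ((· + 1) '' (c' '' G'.edgeSet))).ncard = n + 1 := by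
      rw [Set.ncard_insert_of_notMem (by rintro ⟨j, -, hj⟩; exact Nat.succ_ne_zero j (by simpa using hj))
        ((Set.toFinite _).image _)]
      rw [Set.ncard_image_of_injective _ (add_left_injective 1), hn]
    rw [← h1]
    exact Set.ncard_le_ncard hsub (Set.toFinite _)
  have hle : n + 1 ≤ sSup {n | ∃ c : Sym2 V → ℕ, isMDColoring G c ∧ (c '' G.edgeSet).ncard = n} :=
    le_trans hcard (le_csSup hbdd ⟨c, hmd, rfl⟩)
  omega
end

section
/- For any two connected graphs G and H each with at least 2 vertices, the strong product satisfies md(G ⊠ H) = 1. -/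
/-- The strong product of two simple graphs. -/
def strongProd {V W : Type*} (G : SimpleGraph V) (H : SimpleGraph W) :
    SimpleGraph (V × W) where
  Adj x y := (G.Adj x.1 y.1 ∧ x.2 = y.2) ∨ (x.1 = y.1 ∧ H.Adj x.2 y.2) ∨
    (G.Adj x.1 y.1 ∧ H.Adj x.2 y.2)
  symm := by
    constructor
    rintro x y (⟨h1, h2⟩ | ⟨h1, h2⟩ | ⟨h1, h2⟩)
    · exact Or.inl ⟨h1.symm, h2.symm⟩
    · exact Or.inr (Or.inl ⟨h1.symm, h2.symm⟩)
    · exact Or.inr (Or.inr ⟨h1.symm, h2.symm⟩)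
  loopless := by
    constructor
    rintro x (⟨h1, _⟩ | ⟨_, h2⟩ | ⟨h1, _⟩)
    · exact G.irrefl h1
    · exact H.irrefl h2
    · exact G.irrefl h1

/-- In an MD-coloring, all three edges of a triangle have the same color. -/
lemma triangle_eq_s18 {X : Type*} {Γ : SimpleGraph X} {c : Sym2 X → ℕ}
    (hc : isMDColoring Γ c) {x y z : X} (hxy : Γ.Adj x y) (hxz : Γ.Adj x z)
    (hyz : Γ.Adj y z) : c s(x,y) = c s(x,z) ∧ c s(x,y) = c s(y,z) := by
  have key : ∀ (p q r : X), Γ.Adj p q → Γ.Adj p r → Γ.Adj r q →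
      c s(p,r) = c s(p,q) ∨ c s(r,q) = c s(p,q) := by
    intro p q r hpq hpr hrq
    obtain ⟨i, hi⟩ := hc p q hpq.ne
    have hpq' : c s(p,q) = i := by
      by_contra hne
      exact hi ⟨SimpleGraph.Walk.cons
        (by simp [SimpleGraph.deleteEdges_adj, hpq, hne]) SimpleGraph.Walk.nil⟩
    by_contra hcon
    push_neg at hcon
    obtain ⟨h1, h2⟩ := hcon
    rw [hpq'] at h1 h2
    have e1 : (Γ.deleteEdges {e | c e = i}).Adj p r := by
      simp [SimpleGraph.deleteEdges_adj, hpr, h1]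
    have e2 : (Γ.deleteEdges {e | c e = i}).Adj r q := by
      simp [SimpleGraph.deleteEdges_adj, hrq, h2]
    exact hi ⟨SimpleGraph.Walk.cons e1 (SimpleGraph.Walk.cons e2 SimpleGraph.Walk.nil)⟩
  have sw : ∀ a b : X, c s(a,b) = c s(b,a) := fun a b => congrArg c Sym2.eq_swap
  have k1 := key x y z hxy hxz hyz.symm
  have k2 := key x z y hxz hxy hyz
  have k3 := key y z x hyz hxy.symm hxz
  rw [sw z y] at k1
  rw [sw y x] at k3
  rcases k1 with k1 | k1 <;> rcases k2 with k2 | k2 <;> rcases k3 with k3 | k3 <;>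
    omega

/-- A function that is constant on edges of a connected graph is constant. -/
lemma const_of_reachable {X : Type*} {Γ : SimpleGraph X} (f : X → ℕ)
    (h : ∀ x y, Γ.Adj x y → f x = f y) {x y : X} (hr : Γ.Reachable x y) :
    f x = f y := by
  obtain ⟨w⟩ := hr
  induction w with
  | nil => rfl
  | cons h' p ih => exact (h _ _ h').trans ih

lemma exists_adj_of_connected {X : Type*} [Nontrivial X] {Γ : SimpleGraph X}
    (h : Γ.Connected) : ∃ x y, Γ.Adj x y := by
  obtain ⟨x, y, hxy⟩ := exists_pair_ne X
  obtain ⟨w⟩ := h.preconnected x y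
  cases w with
  | nil => exact absurd rfl hxy
  | cons h' _ => exact ⟨_, _, h'⟩

theorem strongProd_md {V W : Type*} [Fintype V] [Fintype W]
    (G : SimpleGraph V) (H : SimpleGraph W) (hG : G.Connected) (hH : H.Connected)
    [Nontrivial V] [Nontrivial W] :
    mdNum (strongProd G H) = 1 := by
  classical
  set Γ := strongProd G H with hΓ
  obtain ⟨u₀, v₀, hu₀⟩ := exists_adj_of_connected hG
  obtain ⟨a₀, b₀, ha₀⟩ := exists_adj_of_connected hH
  have adjrow : ∀ {u v : V} (a : W), G.Adj u v → Γ.Adj (u,a) (v,a) :=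
    fun a h => Or.inl ⟨h, rfl⟩
  have adjcol : ∀ (u : V) {a b : W}, H.Adj a b → Γ.Adj (u,a) (u,b) :=
    fun u {a b} h => Or.inr (Or.inl ⟨rfl, h⟩)
  have adjdiag : ∀ {u v : V} {a b : W}, G.Adj u v → H.Adj a b → Γ.Adj (u,a) (v,b) :=
    fun hg hh => Or.inr (Or.inr ⟨hg, hh⟩)
  -- Main claim: any MD-coloring is constant on edges
  have main : ∀ c : Sym2 (V × W) → ℕ, isMDColoring Γ c →
      ∀ e ∈ Γ.edgeSet, c e = c s((u₀,a₀),(v₀,a₀)) := by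
    intro c hc
    have sw : ∀ a b : V × W, c s(a,b) = c s(b,a) := fun a b => congrArg c Sym2.eq_swap
    -- box lemmas
    have box1 : ∀ {u v : V} {a b : W}, G.Adj u v → H.Adj a b →
        c s((u,a),(v,a)) = c s((u,a),(u,b)) := by
      intro u v a b hu ha
      exact (triangle_eq_s18 hc (adjrow a hu) (adjcol u ha) (adjdiag hu.symm ha)).1
    have box3 : ∀ {u v : V} {a b : W}, G.Adj u v → H.Adj a b →
        c s((u,a),(v,b)) = c s((u,a),(v,a)) := by
      intro u v a b hu ha
      exact (triangle_eq_s18 hc (adjdiag hu ha) (adjrow a hu) (adjcol v ha.symm)).1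
    -- row colors don't depend on the H-coordinate
    have rowconst : ∀ {u v : V}, G.Adj u v → ∀ a b : W,
        c s((u,a),(v,a)) = c s((u,b),(v,b)) := by
      intro u v hu a b
      refine const_of_reachable (Γ := H) (fun a => c s((u,a),(v,a))) ?_
        (hH.preconnected a b)
      intro a b hab
      have h1 := box1 hu hab
      have h2 := box1 hu hab.symm
      rw [sw (u,b) (u,a)] at h2
      exact h1.trans h2.symm
    -- column colors don't depend on the G-coordinate
    have colconst : ∀ {a b : W}, H.Adj a b → ∀ u v : V,
        c s((u,a),(u,b)) = c s((v,a),(v,b)) := by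
      intro a b hab u v
      refine const_of_reachable (Γ := G) (fun u => c s((u,a),(u,b))) ?_
        (hG.preconnected u v)
      intro u v hu
      have h1 := box1 hu hab
      have h2 := box1 hu.symm hab
      rw [sw (v,a) (u,a)] at h2
      exact h1.symm.trans h2
    -- all G-type edges have the base color
    have GEdge : ∀ {u v : V} (a : W), G.Adj u v →
        c s((u,a),(v,a)) = c s((u₀,a₀),(v₀,a₀)) := by
      intro u v a hu
      calc c s((u,a),(v,a)) = c s((u,a₀),(v,a₀)) := rowconst hu a a₀
        _ = c s((u,a₀),(u,b₀)) := box1 hu ha₀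
        _ = c s((u₀,a₀),(u₀,b₀)) := colconst ha₀ u u₀
        _ = c s((u₀,a₀),(v₀,a₀)) := (box1 hu₀ ha₀).symm
    have HEdge : ∀ (u : V) {a b : W}, H.Adj a b →
        c s((u,a),(u,b)) = c s((u₀,a₀),(v₀,a₀)) := by
      intro u a b hab
      calc c s((u,a),(u,b)) = c s((u₀,a),(u₀,b)) := colconst hab u u₀
        _ = c s((u₀,a),(v₀,a)) := (box1 hu₀ hab).symm
        _ = c s((u₀,a₀),(v₀,a₀)) := GEdge a hu₀
    intro e he
    induction e using Sym2.ind with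
    | _ x y =>
      rw [SimpleGraph.mem_edgeSet] at he
      obtain ⟨u, a⟩ := x
      obtain ⟨v, b⟩ := y
      rcases he with ⟨hu, heq⟩ | ⟨heq, hab⟩ | ⟨hu, hab⟩
      · simp only at heq; subst heq; exact GEdge a hu
      · simp only at heq; subst heq; exact HEdge u hab
      · exact (box3 hu hab).trans (GEdge a hu)
  -- the base edge is in the edge set
  have hbase : s((u₀,a₀),(v₀,a₀)) ∈ Γ.edgeSet := adjrow a₀ hu₀
  have himg : ∀ c : Sym2 (V × W) → ℕ, isMDColoring Γ c →
      c '' Γ.edgeSet = {c s((u₀,a₀),(v₀,a₀))} := by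
    intro c hc
    apply Set.eq_singleton_iff_unique_mem.mpr
    constructor
    · exact ⟨_, hbase, rfl⟩
    · rintro n ⟨e, he, rfl⟩
      exact main c hc e he
  -- the constant coloring is an MD-coloring
  have hconst : isMDColoring Γ (fun _ => 0) := by
    intro u v huv
    refine ⟨0, ?_⟩
    rintro ⟨w⟩
    cases w with
    | nil => exact huv rfl
    | cons h' _ =>
      rw [SimpleGraph.deleteEdges_adj] at h'
      exact h'.2 rfl
  have hset : {n | ∃ c : Sym2 (V × W) → ℕ, isMDColoring Γ c ∧
      (c '' Γ.edgeSet).ncard = n} = {1} := by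
    ext n
    simp only [Set.mem_setOf_eq, Set.mem_singleton_iff]
    constructor
    · rintro ⟨c, hc, rfl⟩
      rw [himg c hc, Set.ncard_singleton]
    · rintro rfl
      exact ⟨fun _ => 0, hconst, by rw [himg _ hconst, Set.ncard_singleton]⟩
  rw [mdNum, hset]
  exact csSup_singleton 1
end
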